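/- arXiv:2204.05033 — 7 statements merged into one kernel-verified Lean document; each statement's English description precedes it below -/
import Mathlib

section
/- For any n-type P on a finite alphabet A of size m, the cardinality of the type class T(P) satisfies (n+1)^{−m} e^{nH(P)} ≤ |T(P)| ≤ e^{nH(P)}. -/
open scoped Classical BigOperators

/-- The empirical PMF (type) of a string `x ∈ A^n`. -/
noncomputable def empPMF {A : Type*} [Fintype A] (n : ℕ) (x : Fin n → A) (a : A) : ℝ :=
  ((Finset.univ.filter (fun i : Fin n => x i = a)).card : ℝ) / n

/-- Shannon entropy (natural log) of a PMF on a finite alphabet. -/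
noncomputable def shannonEntropy {A : Type*} [Fintype A] (P : A → ℝ) : ℝ :=
  -∑ a, P a * Real.log (P a)

namespace TypeClassAux

open Finset
open scoped Nat

variable {A : Type*} [Fintype A]

/-- count of a letter in a string -/
noncomputable def cnt {n : ℕ} (x : Fin n → A) (a : A) : ℕ :=
  (Finset.univ.filter fun i => x i = a).card

lemma cnt_card {n : ℕ} (x : Fin n → A) (a : A) :
    Fintype.card {i : Fin n // x i = a} = cnt x a :=
  Fintype.card_subtype _

lemma sum_cnt {n : ℕ} (x : Fin n → A) : ∑ a, cnt x a = n := by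
  have h := Finset.card_eq_sum_card_fiberwise
    (f := x) (s := (univ : Finset (Fin n))) (t := (univ : Finset A))
    (fun i _ => mem_univ (x i))
  simpa [cnt] using h.symm

lemma cnt_comp_perm {n : ℕ} (x : Fin n → A) (σ : Equiv.Perm (Fin n)) :
    cnt (x ∘ ⇑σ) = cnt x := by
  funext a
  exact Finset.card_equiv σ (fun i => by simp)

/-- permutations relating `x0` to `y` correspond to families of fiber bijections -/
noncomputable def permFiberEquiv {n : ℕ} (x0 y : Fin n → A) :
    {σ : Equiv.Perm (Fin n) // x0 ∘ ⇑σ = y} ≃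
      ∀ a : A, ({i : Fin n // y i = a} ≃ {i : Fin n // x0 i = a}) where
  toFun σ a := Equiv.subtypeEquiv σ.1 fun i => by
    rw [← congrFun σ.2 i]; exact Iff.rfl
  invFun f := ⟨Equiv.ofFiberEquiv f, by
    funext i; exact Equiv.ofFiberEquiv_map f i⟩
  left_inv σ := Subtype.ext (Equiv.ext fun i => rfl)
  right_inv f := by
    funext a
    apply Equiv.ext
    rintro ⟨i, hi⟩
    apply Subtype.ext
    show (f (y i) ⟨i, rfl⟩).val = (f a ⟨i, hi⟩).val
    subst hi
    rfl

/-- fiber of `Sigma.fst` -/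
noncomputable def sigmaFstFiber {β : A → Type*} (a : A) :
    {p : Σ a', β a' // p.1 = a} ≃ β a where
  toFun p := p.2 ▸ p.1.2
  invFun b := ⟨⟨a, b⟩, rfl⟩
  left_inv := by rintro ⟨⟨a', b⟩, h⟩; dsimp at h; subst h; rfl
  right_inv b := rfl

lemma card_typeclass_mul_factorials {n : ℕ} (l : A → ℕ) (hl : ∑ a, l a = n) :
    ((univ.filter fun x : Fin n → A => cnt x = l).card) * ∏ a, (l a)! = n ! := by
  have e : (Σ a : A, Fin (l a)) ≃ Fin n := Fintype.equivOfCardEq (by simp [hl])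
  set x0 : Fin n → A := fun i => (e.symm i).1 with hx0def
  have hx0 : cnt x0 = l := by
    funext a
    rw [← cnt_card]
    have E1 : {i : Fin n // x0 i = a} ≃ {p : Σ a', Fin (l a') // p.1 = a} :=
      (Equiv.subtypeEquiv e.symm fun i => Iff.rfl)
    rw [Fintype.card_congr (E1.trans (sigmaFstFiber a))]
    simp
  have key : ∀ y ∈ univ.filter (fun x : Fin n → A => cnt x = l),
      (univ.filter fun σ : Equiv.Perm (Fin n) => x0 ∘ ⇑σ = y).card = ∏ a, (l a)! := by
    intro y hy
    have hy' : cnt y = l := (mem_filter.mp hy).2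
    calc (univ.filter fun σ : Equiv.Perm (Fin n) => x0 ∘ ⇑σ = y).card
        = Fintype.card {σ : Equiv.Perm (Fin n) // x0 ∘ ⇑σ = y} :=
          (Fintype.card_subtype _).symm
      _ = Fintype.card (∀ a : A, ({i : Fin n // y i = a} ≃ {i : Fin n // x0 i = a})) :=
          Fintype.card_congr (permFiberEquiv x0 y)
      _ = ∏ a, Fintype.card ({i : Fin n // y i = a} ≃ {i : Fin n // x0 i = a}) :=
          Fintype.card_pi
      _ = ∏ a, (l a)! := by
          refine Finset.prod_congr rfl fun a _ => ?_
          have h1 : Fintype.card {i : Fin n // y i = a} = l a := by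
            rw [cnt_card, hy']
          have h2 : Fintype.card {i : Fin n // x0 i = a} = l a := by
            rw [cnt_card, hx0]
          rw [Fintype.card_equiv (Fintype.equivOfCardEq (h1.trans h2.symm)), h1]
  have hcard : Fintype.card (Equiv.Perm (Fin n)) =
      ∑ y ∈ univ.filter (fun x : Fin n → A => cnt x = l),
        (univ.filter fun σ : Equiv.Perm (Fin n) => x0 ∘ ⇑σ = y).card := by
    rw [← card_univ]
    exact Finset.card_eq_sum_card_fiberwise fun σ _ =>
      mem_filter.mpr ⟨mem_univ _, (cnt_comp_perm x0 σ).trans hx0⟩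
  rw [Fintype.card_perm, Fintype.card_fin] at hcard
  rw [Finset.sum_congr rfl key, Finset.sum_const, smul_eq_mul] at hcard
  exact hcard.symm

lemma factorial_le_aux (l d : ℕ) : (l + d)! ≤ l ! * (l + d) ^ d := by
  induction d with
  | zero => simp
  | succ d ih =>
    have h1 : (l + (d + 1))! = (l + d + 1) * (l + d)! := by
      rw [show l + (d + 1) = (l + d) + 1 by ring, Nat.factorial_succ]
    rw [h1]
    calc (l + d + 1) * (l + d)! ≤ (l + d + 1) * (l ! * (l + d) ^ d) :=
          Nat.mul_le_mul_left _ ih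
      _ ≤ (l + d + 1) * (l ! * (l + d + 1) ^ d) := by
          exact Nat.mul_le_mul_left _ (Nat.mul_le_mul_left _
            (Nat.pow_le_pow_left (by omega) d))
      _ = l ! * (l + (d + 1)) ^ (d + 1) := by ring
  
lemma factorial_ge_aux (k d : ℕ) : k ! * k ^ d ≤ (k + d)! := by
  induction d with
  | zero => simp
  | succ d ih =>
    calc k ! * k ^ (d + 1) = (k ! * k ^ d) * k := by ring
      _ ≤ (k + d)! * k := Nat.mul_le_mul_right _ ih
      _ ≤ (k + d)! * (k + d + 1) := Nat.mul_le_mul_left _ (by omega)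
      _ = (k + (d + 1))! := by
          rw [show k + (d + 1) = (k + d) + 1 by ring, Nat.factorial_succ]; ring

lemma fact_pow_le (k l : ℕ) : k ! * k ^ l ≤ l ! * k ^ k := by
  rcases le_total l k with h | h
  · obtain ⟨d, rfl⟩ := Nat.exists_eq_add_of_le h
    calc (l + d)! * (l + d) ^ l ≤ (l ! * (l + d) ^ d) * (l + d) ^ l :=
          Nat.mul_le_mul_right _ (factorial_le_aux l d)
      _ = l ! * (l + d) ^ (l + d) := by rw [mul_assoc, ← pow_add]; ring_nf
  · obtain ⟨d, rfl⟩ := Nat.exists_eq_add_of_le h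
    calc k ! * k ^ (k + d) = (k ! * k ^ d) * k ^ k := by rw [mul_assoc, ← pow_add]; ring_nf
      _ ≤ (k + d)! * k ^ k := Nat.mul_le_mul_right _ (factorial_ge_aux k d)

end TypeClassAux

open Finset TypeClassAux in
open scoped Nat in
/-- for any `n`-type `P` on `A` with `|A| = m`, the type class
`T(P)` satisfies `(n+1)^{-m} e^{nH(P)} ≤ |T(P)| ≤ e^{nH(P)}`. -/
theorem type_class_card_bounds {A : Type*} [Fintype A]
    (n : ℕ) (hn : 0 < n) (P : A → ℝ) (hP0 : ∀ a, 0 ≤ P a) (hP1 : (∑ a, P a) = 1)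
    (hPtype : ∀ a, ∃ j : ℕ, P a = (j : ℝ) / n) :
    ((n + 1 : ℝ) ^ (Fintype.card A))⁻¹ * Real.exp (n * shannonEntropy P)
      ≤ ((Finset.univ.filter (fun x : Fin n → A => empPMF n x = P)).card : ℝ) ∧
    ((Finset.univ.filter (fun x : Fin n → A => empPMF n x = P)).card : ℝ)
      ≤ Real.exp (n * shannonEntropy P) := by
  choose k hk using hPtype
  have hn' : (0:ℝ) < n := by exact_mod_cast hn
  have hkn : ∀ a, (k a : ℝ) = n * P a := fun a => by rw [hk a]; field_simp
  have hsum_k : ∑ a, k a = n := by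
    have : ((∑ a, k a : ℕ) : ℝ) = n := by
      push_cast
      rw [Finset.sum_congr rfl fun a _ => hkn a, ← Finset.mul_sum, hP1, mul_one]
    exact_mod_cast this
  -- identification of the type class
  have hfilter : (Finset.univ.filter (fun x : Fin n → A => empPMF n x = P)) =
      (Finset.univ.filter (fun x : Fin n → A => cnt x = k)) := by
    ext x
    simp only [mem_filter, mem_univ, true_and]
    constructor
    · intro h
      funext a
      have h4 := congrFun h a
      rw [empPMF, hk a] at h4
      field_simp at h4
      exact_mod_cast h4
    · intro h
      funext a
      rw [empPMF, hk a]
      congr 1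
      exact_mod_cast congrFun h a
  set Tc : (A → ℕ) → ℕ := fun l => (Finset.univ.filter (fun x : Fin n → A => cnt x = l)).card
    with hTc
  set S : Finset (A → ℕ) := Finset.piAntidiag (Finset.univ : Finset A) n with hS
  have hmemS : ∀ x : Fin n → A, cnt x ∈ S := fun x =>
    Finset.mem_piAntidiag.mpr ⟨sum_cnt x, fun i _ => mem_univ i⟩
  have hkS : k ∈ S := Finset.mem_piAntidiag.mpr ⟨hsum_k, fun i _ => mem_univ i⟩
  -- q(x) as product of powers
  have hq : ∀ x : Fin n → A, (∏ i, P (x i)) = ∏ a, P a ^ cnt x a := by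
    intro x
    rw [Finset.prod_comp P x]
    refine Finset.prod_subset (Finset.subset_univ _) fun a _ ha => ?_
    have : (Finset.univ.filter fun i => x i = a) = ∅ := by
      rw [Finset.filter_eq_empty_iff]
      intro i _ hxi
      exact ha (Finset.mem_image.mpr ⟨i, mem_univ i, hxi⟩)
    simp [cnt, this]
  -- total probability mass is one
  have hsum1 : ∑ x : Fin n → A, ∏ a, P a ^ cnt x a = 1 := by
    have h0 : ∑ x : Fin n → A, ∏ i, P (x i) = 1 := by
      calc ∑ x : Fin n → A, ∏ i, P (x i)
          = ∑ x ∈ Fintype.piFinset (fun _ : Fin n => (univ : Finset A)), ∏ i, P (x i) := by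
            rw [Fintype.piFinset_univ]
        _ = ∏ _i : Fin n, ∑ a, P a := (Finset.prod_univ_sum _ _).symm
        _ = 1 := by simp [hP1]
    rw [← h0]
    exact Finset.sum_congr rfl fun x _ => (hq x).symm
  -- group by type
  have hgroup : ∑ l ∈ S, (Tc l : ℝ) * ∏ a, P a ^ l a = 1 := by
    rw [← hsum1, ← Finset.sum_fiberwise_of_maps_to (fun x _ => hmemS x)
      (fun x => ∏ a, P a ^ cnt x a)]
    refine Finset.sum_congr rfl fun l _ => ?_
    have : ∀ x ∈ Finset.univ.filter (fun x : Fin n → A => cnt x = l),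
        (∏ a, P a ^ cnt x a) = ∏ a, P a ^ l a := fun x hx => by
      rw [(Finset.mem_filter.mp hx).2]
    rw [Finset.sum_congr rfl this, Finset.sum_const, nsmul_eq_mul]
  -- rewrite the power product over a type
  have hPprod : ∀ l : A → ℕ, (∑ a, l a = n) →
      ∏ a, P a ^ l a = (∏ a, (k a : ℝ) ^ l a) / (n : ℝ) ^ n := by
    intro l hl
    calc ∏ a, P a ^ l a = ∏ a, ((k a : ℝ) ^ l a / (n : ℝ) ^ l a) := by
          exact Finset.prod_congr rfl fun a _ => by rw [hk a, div_pow]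
      _ = (∏ a, (k a : ℝ) ^ l a) / ∏ a, (n : ℝ) ^ l a := Finset.prod_div_distrib _ _
      _ = (∏ a, (k a : ℝ) ^ l a) / (n : ℝ) ^ n := by
          rw [Finset.prod_pow_eq_pow_sum, hl]
  -- the max-term inequality
  have hmax : ∀ l ∈ S, (Tc l : ℝ) * ∏ a, P a ^ l a ≤ (Tc k : ℝ) * ∏ a, P a ^ k a := by
    intro l hlS
    have hsl : ∑ a, l a = n := (Finset.mem_piAntidiag.mp hlS).1
    rw [hPprod l hsl, hPprod k hsum_k, mul_div_assoc', mul_div_assoc',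
      div_le_div_iff_of_pos_right (by positivity)]
    have hnat : Tc l * ∏ a, k a ^ l a ≤ Tc k * ∏ a, k a ^ k a := by
      have h1 := card_typeclass_mul_factorials l hsl
      have h2 := card_typeclass_mul_factorials k hsum_k
      have hpos : 0 < (∏ a, (l a)!) * ∏ a, (k a)! :=
        Nat.mul_pos (Finset.prod_pos fun a _ => Nat.factorial_pos _)
          (Finset.prod_pos fun a _ => Nat.factorial_pos _)
      refine Nat.le_of_mul_le_mul_right ?_ hpos
      calc Tc l * (∏ a, k a ^ l a) * ((∏ a, (l a)!) * ∏ a, (k a)!)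
          = (Tc l * ∏ a, (l a)!) * ((∏ a, (k a)!) * ∏ a, k a ^ l a) := by ring
        _ = n ! * ∏ a, ((k a)! * k a ^ l a) := by
            rw [h1, Finset.prod_mul_distrib]
        _ ≤ n ! * ∏ a, ((l a)! * k a ^ k a) := by
            refine Nat.mul_le_mul_left _ (Finset.prod_le_prod' fun a _ => ?_)
            exact fact_pow_le (k a) (l a)
        _ = (Tc k * ∏ a, (k a)!) * ((∏ a, (l a)!) * ∏ a, k a ^ k a) := by
            rw [← h2, Finset.prod_mul_distrib]
        _ = Tc k * (∏ a, k a ^ k a) * ((∏ a, (l a)!) * ∏ a, (k a)!) := by ring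
    exact_mod_cast hnat
  -- the number of types is at most (n+1)^m
  have hScard : (S.card : ℝ) ≤ (n + 1 : ℝ) ^ (Fintype.card A) := by
    have hinj : ∀ l ∈ S, ∀ a, l a ≤ n := by
      intro l hlS a
      have hsl : ∑ b, l b = n := (Finset.mem_piAntidiag.mp hlS).1
      calc l a ≤ ∑ b, l b := Finset.single_le_sum (fun b _ => Nat.zero_le _) (mem_univ a)
        _ = n := hsl
    have h1 : S.card ≤ (Finset.univ : Finset (A → Fin (n + 1))).card := by
      refine Finset.card_le_card_of_injOn
        (fun l a => (⟨min (l a) n, by omega⟩ : Fin (n + 1)))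
        (fun _ _ => mem_univ _) ?_
      intro l1 h1 l2 h2 h12
      funext a
      have := congrFun h12 a
      have e1 := hinj l1 h1 a
      have e2 := hinj l2 h2 a
      simpa [Fin.mk.injEq, Nat.min_eq_left e1, Nat.min_eq_left e2] using this
    have h2 : (Finset.univ : Finset (A → Fin (n + 1))).card = (n + 1) ^ (Fintype.card A) := by
      rw [Finset.card_univ, Fintype.card_fun, Fintype.card_fin]
    have := h1.trans_eq h2
    exact_mod_cast this
  -- entropy identity
  have hRe : (∏ a, P a ^ k a) = Real.exp (∑ a, (k a : ℝ) * Real.log (P a)) := by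
    rw [Real.exp_sum]
    refine Finset.prod_congr rfl fun a _ => ?_
    rcases Nat.eq_zero_or_pos (k a) with h0 | hpos
    · simp [h0]
    · have hPa : 0 < P a := by
        rw [hk a]
        apply div_pos _ hn'
        exact_mod_cast hpos
      rw [Real.exp_nat_mul, Real.exp_log hPa]
  have hZ : (n : ℝ) * shannonEntropy P = -∑ a, (k a : ℝ) * Real.log (P a) := by
    rw [shannonEntropy, mul_neg]
    congr 1
    rw [Finset.mul_sum]
    exact Finset.sum_congr rfl fun a _ => by rw [← mul_assoc, ← hkn a]
  set R := ∏ a, P a ^ k a with hR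
  have hRpos : 0 < R := hRe ▸ Real.exp_pos _
  have hexpR : Real.exp ((n:ℝ) * shannonEntropy P) = R⁻¹ := by
    rw [hZ, Real.exp_neg, hRe]
  have hupper : (Tc k : ℝ) * R ≤ 1 := by
    rw [← hgroup]
    exact Finset.single_le_sum (f := fun l => (Tc l : ℝ) * ∏ a, P a ^ l a)
      (fun l _ => mul_nonneg (Nat.cast_nonneg _)
        (Finset.prod_nonneg fun a _ => pow_nonneg (hP0 a) _)) hkS
  have hlow : (1:ℝ) ≤ ((n+1:ℝ) ^ Fintype.card A) * ((Tc k : ℝ) * R) := by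
    calc (1:ℝ) = ∑ l ∈ S, (Tc l : ℝ) * ∏ a, P a ^ l a := hgroup.symm
      _ ≤ S.card • ((Tc k : ℝ) * R) := Finset.sum_le_card_nsmul _ _ _ hmax
      _ = (S.card : ℝ) * ((Tc k:ℝ) * R) := by rw [nsmul_eq_mul]
      _ ≤ _ := by
          apply mul_le_mul_of_nonneg_right hScard
          exact mul_nonneg (Nat.cast_nonneg _) hRpos.le
  have hC : (0:ℝ) < (n+1:ℝ) ^ Fintype.card A := by positivity
  have hfinal1 : ((n + 1 : ℝ) ^ (Fintype.card A))⁻¹ * Real.exp (n * shannonEntropy P)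
      ≤ (Tc k : ℝ) := by
    rw [hexpR]
    have key : ((n+1:ℝ)^Fintype.card A)⁻¹ * R⁻¹ *
        (((n+1:ℝ)^Fintype.card A) * ((Tc k:ℝ) * R)) = Tc k := by
      field_simp
    calc ((n+1:ℝ)^Fintype.card A)⁻¹ * R⁻¹
        = ((n+1:ℝ)^Fintype.card A)⁻¹ * R⁻¹ * 1 := by ring
      _ ≤ ((n+1:ℝ)^Fintype.card A)⁻¹ * R⁻¹ *
            (((n+1:ℝ)^Fintype.card A) * ((Tc k:ℝ) * R)) := by
          exact mul_le_mul_of_nonneg_left hlow (by positivity)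
      _ = Tc k := key
  have hfinal2 : (Tc k : ℝ) ≤ Real.exp (n * shannonEntropy P) := by
    rw [hexpR]
    calc (Tc k:ℝ) = ((Tc k:ℝ) * R) * R⁻¹ := by field_simp
      _ ≤ 1 * R⁻¹ := mul_le_mul_of_nonneg_right hupper (inv_nonneg.mpr hRpos.le)
      _ = R⁻¹ := one_mul _
  rw [hfilter]
  exact ⟨hfinal1, hfinal2⟩
end

section
/- For any n-type P on a finite alphabet A of size m and any PMF Q on A, the probability under the product measure Q^n of the type class T(P) satisfies (n+1)^{−m} e^{−nD(P‖Q)} ≤ Q^n(T(P)) ≤ e^{−nD(P‖Q)}. -/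
open scoped Classical BigOperators ENNReal Nat


/-- number of occurrences of `a` in the string `x`. -/
noncomputable def myCnt {A : Type*} [Fintype A] (n : ℕ) (x : Fin n → A) (a : A) : ℕ :=
  (Finset.univ.filter (fun i => x i = a)).card

lemma myCnt_eq_card {A : Type*} [Fintype A] (n : ℕ) (x : Fin n → A) (a : A) :
    myCnt n x a = Fintype.card {i // x i = a} := (Fintype.card_subtype _).symm

lemma sum_myCnt {A : Type*} [Fintype A] (n : ℕ) (x : Fin n → A) :
    ∑ a, myCnt n x a = n := by
  have := Finset.card_eq_sum_card_fiberwise (f := x) (s := Finset.univ)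
    (t := Finset.univ) (fun i _ => Finset.mem_univ _)
  simpa [myCnt] using this.symm

lemma prod_comp_myCnt {A : Type*} [Fintype A] (n : ℕ) (x : Fin n → A) (f : A → ℝ) :
    ∏ i, f (x i) = ∏ a, f a ^ myCnt n x a := by
  rw [← Finset.prod_fiberwise_of_maps_to (g := x) (t := Finset.univ)
    (fun i _ => Finset.mem_univ _) (fun i => f (x i))]
  refine Finset.prod_congr rfl fun a _ => ?_
  have h1 : ∀ i ∈ Finset.univ.filter (fun i => x i = a), f (x i) = f a := fun i hi => by
    rw [(Finset.mem_filter.mp hi).2]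
  rw [Finset.prod_congr rfl h1, Finset.prod_const]
  rfl

/-- fiber of a sigma type over a point of the base -/
def sigmaFiberEquiv' {A : Type*} (F : A → Type*) (a : A) :
    {s : Σ a', F a' // s.1 = a} ≃ F a where
  toFun s := s.2 ▸ s.1.2
  invFun j := ⟨⟨a, j⟩, rfl⟩
  left_inv := fun ⟨⟨a', j⟩, h⟩ => by subst h; rfl
  right_inv j := rfl

/-- there exists a string with any prescribed counts summing to `n`. -/
lemma exists_string {A : Type*} [Fintype A] (n : ℕ) (c : A → ℕ) (hc : ∑ a, c a = n) :
    ∃ x₀ : Fin n → A, ∀ a, myCnt n x₀ a = c a := by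
  have hcard : Fintype.card (Σ a, Fin (c a)) = Fintype.card (Fin n) := by
    simp [Fintype.card_sigma, hc]
  let e : (Σ a, Fin (c a)) ≃ Fin n := Fintype.equivOfCardEq hcard
  refine ⟨fun i => (e.symm i).1, fun a => ?_⟩
  rw [myCnt_eq_card]
  have h1 : Fintype.card {i // (e.symm i).1 = a}
      = Fintype.card {s : Σ a', Fin (c a') // s.1 = a} :=
    Fintype.card_congr (Equiv.subtypeEquiv e.symm fun i => Iff.rfl)
  have h2 : Fintype.card {s : Σ a', Fin (c a') // s.1 = a} = Fintype.card (Fin (c a)) :=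
    Fintype.card_congr (sigmaFiberEquiv' (fun a' => Fin (c a')) a)
  simp only [h1, h2, Fintype.card_fin]

lemma psi_coe {A : Type*} [Fintype A] {n : ℕ} {x₀ x : Fin n → A}
    (ψ : ∀ a, ({i // x i = a} ≃ {i // x₀ i = a})) {i : Fin n} {a : A} (h : x i = a) :
    ((ψ (x i) ⟨i, rfl⟩ : {j // x₀ j = x i}) : Fin n) = ((ψ a ⟨i, h⟩ : {j // x₀ j = a}) : Fin n) := by
  subst h; rfl

/-- permutations carrying `x₀` to `x` correspond to families of fiber bijections. -/
noncomputable def permFiberEquiv {A : Type*} [Fintype A] {n : ℕ} (x₀ x : Fin n → A) :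
    {σ : Equiv.Perm (Fin n) // x₀ ∘ σ = x} ≃ ∀ a, ({i // x i = a} ≃ {i // x₀ i = a}) where
  toFun := fun ⟨σ, h⟩ => fun a => σ.subtypeEquiv (fun i => by rw [show x₀ (σ i) = x i from congrFun h i])
  invFun := fun ψ => by
    refine ⟨Equiv.ofBijective (fun i => ((ψ (x i) ⟨i, rfl⟩ : {j // x₀ j = x i}) : Fin n)) ?_, ?_⟩
    · rw [Fintype.bijective_iff_injective_and_card]
      refine ⟨fun i i' hii' => ?_, rfl⟩
      have e1 : x₀ ((ψ (x i) ⟨i, rfl⟩ : {j // x₀ j = x i}) : Fin n) = x i :=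
        (ψ (x i) ⟨i, rfl⟩).2
      have e2 : x₀ ((ψ (x i') ⟨i', rfl⟩ : {j // x₀ j = x i'}) : Fin n) = x i' :=
        (ψ (x i') ⟨i', rfl⟩).2
      have hii2 : ((ψ (x i) ⟨i, rfl⟩ : {j // x₀ j = x i}) : Fin n)
          = ((ψ (x i') ⟨i', rfl⟩ : {j // x₀ j = x i'}) : Fin n) := hii'
      have hxx : x i = x i' := by rw [← e1, ← e2, hii2]
      rw [psi_coe ψ hxx] at hii2
      have := (ψ (x i')).injective (Subtype.ext hii2)
      exact congrArg Subtype.val this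
    · funext i
      exact (ψ (x i) ⟨i, rfl⟩).2
  left_inv := fun ⟨σ, h⟩ => by
    refine Subtype.ext (Equiv.ext fun i => ?_)
    rfl
  right_inv := fun ψ => by
    funext a
    refine Equiv.ext fun j => ?_
    obtain ⟨i, hi⟩ := j
    exact Subtype.ext (psi_coe ψ hi)

/-- the number of strings with prescribed counts, times the product of factorials,
is `n!`. -/
lemma card_type_class {A : Type*} [Fintype A] (n : ℕ) (c : A → ℕ) (hc : ∑ a, c a = n) :
    (Finset.univ.filter (fun x : Fin n → A => ∀ a, myCnt n x a = c a)).card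
      * ∏ a, (c a)! = n ! := by
  obtain ⟨x₀, hx₀⟩ := exists_string n c hc
  have hmem : ∀ σ : Equiv.Perm (Fin n), x₀ ∘ σ ∈
      Finset.univ.filter (fun x : Fin n → A => ∀ a, myCnt n x a = c a) := by
    intro σ
    refine Finset.mem_filter.mpr ⟨Finset.mem_univ _, fun a => ?_⟩
    rw [myCnt_eq_card]
    have : Fintype.card {i // (x₀ ∘ σ) i = a} = Fintype.card {j // x₀ j = a} :=
      Fintype.card_congr (Equiv.subtypeEquiv σ fun i => Iff.rfl)
    rw [this, ← myCnt_eq_card, hx₀]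
  have hcard := Finset.card_eq_sum_card_fiberwise (f := fun σ : Equiv.Perm (Fin n) => x₀ ∘ σ)
    (s := Finset.univ) (t := Finset.univ.filter (fun x : Fin n → A => ∀ a, myCnt n x a = c a))
    (fun σ _ => hmem σ)
  have hperm : (Finset.univ : Finset (Equiv.Perm (Fin n))).card = n ! := by
    simp [Finset.card_univ, Fintype.card_perm]
  -- each fiber has cardinality ∏ a, (c a)!
  have hfiber : ∀ x ∈ Finset.univ.filter (fun x : Fin n → A => ∀ a, myCnt n x a = c a),
      (Finset.univ.filter (fun σ : Equiv.Perm (Fin n) => x₀ ∘ σ = x)).card = ∏ a, (c a)! := by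
    intro x hx
    have hx' : ∀ a, myCnt n x a = c a := (Finset.mem_filter.mp hx).2
    rw [← Fintype.card_subtype]
    rw [Fintype.card_congr (permFiberEquiv x₀ x)]
    rw [Fintype.card_pi]
    refine Finset.prod_congr rfl fun a _ => ?_
    have h1 : Fintype.card {i // x i = a} = c a := by rw [← myCnt_eq_card, hx']
    have h2 : Fintype.card {i // x₀ i = a} = c a := by rw [← myCnt_eq_card, hx₀]
    rw [Fintype.card_equiv (Fintype.equivOfCardEq (h1.trans h2.symm)), h1]
  rw [hperm] at hcard
  rw [Finset.sum_congr rfl hfiber] at hcard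
  rw [Finset.sum_const, smul_eq_mul] at hcard
  exact hcard.symm

lemma aux_fact1 (d c : ℕ) : (c + d)! ≤ (c + d) ^ d * c ! := by
  induction d with
  | zero => simp
  | succ d ih =>
    have h1 : (c + (d+1))! = (c + d + 1) * (c + d)! := by
      rw [show c + (d+1) = (c+d) + 1 by ring, Nat.factorial_succ]
    rw [h1]
    calc (c + d + 1) * (c + d)! ≤ (c + d + 1) * ((c + d) ^ d * c !) :=
          Nat.mul_le_mul_left _ ih
      _ ≤ (c + d + 1) * ((c + d + 1) ^ d * c !) := by
          exact Nat.mul_le_mul_left _ (Nat.mul_le_mul_right _ (Nat.pow_le_pow_left (by omega) d))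
      _ = (c + (d+1)) ^ (d+1) * c ! := by ring_nf

lemma aux_fact2 (d k : ℕ) : k ^ d * k ! ≤ (k + d)! := by
  induction d with
  | zero => simp
  | succ d ih =>
    have h1 : (k + (d+1))! = (k + d + 1) * (k + d)! := by
      rw [show k + (d+1) = (k+d) + 1 by ring, Nat.factorial_succ]
    rw [h1]
    calc k ^ (d+1) * k ! = k * (k ^ d * k !) := by ring
      _ ≤ k * (k + d)! := Nat.mul_le_mul_left _ ih
      _ ≤ (k + d + 1) * (k + d)! := Nat.mul_le_mul_right _ (by omega)

/-- key per-letter inequality: `k^c * k! ≤ k^k * c!` -/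
lemma aux_fact (k c : ℕ) : k ^ c * k ! ≤ k ^ k * c ! := by
  rcases le_total c k with h | h
  · obtain ⟨d, rfl⟩ := Nat.exists_eq_add_of_le h
    calc (c+d) ^ c * (c+d)! ≤ (c+d) ^ c * ((c + d) ^ d * c !) :=
          Nat.mul_le_mul_left _ (aux_fact1 d c)
      _ = (c+d) ^ (c + d) * c ! := by rw [pow_add]; ring
  · obtain ⟨d, rfl⟩ := Nat.exists_eq_add_of_le h
    calc k ^ (k + d) * k ! = k ^ k * (k ^ d * k !) := by rw [pow_add]; ring
      _ ≤ k ^ k * (k + d)! := Nat.mul_le_mul_left _ (aux_fact2 d k)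

/-- type class maximality, natural number form. -/
lemma type_max_nat {A : Type*} [Fintype A] (n : ℕ) (c k : A → ℕ)
    (hc : ∑ a, c a = n) (hk : ∑ a, k a = n) :
    (Finset.univ.filter (fun x : Fin n → A => ∀ a, myCnt n x a = c a)).card * ∏ a, k a ^ c a ≤
    (Finset.univ.filter (fun x : Fin n → A => ∀ a, myCnt n x a = k a)).card * ∏ a, k a ^ k a := by
  set Nc := (Finset.univ.filter (fun x : Fin n → A => ∀ a, myCnt n x a = c a)).card
  set Nk := (Finset.univ.filter (fun x : Fin n → A => ∀ a, myCnt n x a = k a)).card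
  have hPc : 0 < ∏ a, (c a)! := Finset.prod_pos fun a _ => Nat.factorial_pos _
  have hPk : 0 < ∏ a, (k a)! := Finset.prod_pos fun a _ => Nat.factorial_pos _
  refine Nat.le_of_mul_le_mul_right ?_ (Nat.mul_pos hPc hPk)
  calc (Nc * ∏ a, k a ^ c a) * ((∏ a, (c a)!) * ∏ a, (k a)!)
      = (Nc * ∏ a, (c a)!) * ∏ a, (k a ^ c a * (k a)!) := by
        rw [Finset.prod_mul_distrib]; ring
    _ = n ! * ∏ a, (k a ^ c a * (k a)!) := by rw [card_type_class n c hc]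
    _ ≤ n ! * ∏ a, (k a ^ k a * (c a)!) := by
        exact Nat.mul_le_mul_left _ (Finset.prod_le_prod' fun a _ => aux_fact (k a) (c a))
    _ = (Nk * ∏ a, (k a)!) * ∏ a, (k a ^ k a * (c a)!) := by rw [card_type_class n k hk]
    _ = (Nk * ∏ a, k a ^ k a) * ((∏ a, (c a)!) * ∏ a, (k a)!) := by
        rw [Finset.prod_mul_distrib]; ring

/-- type class maximality, real form. -/
lemma type_max_real {A : Type*} [Fintype A] (n : ℕ) (hn : 0 < n) (c k : A → ℕ)
    (hc : ∑ a, c a = n) (hk : ∑ a, k a = n) :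
    ((Finset.univ.filter (fun x : Fin n → A => ∀ a, myCnt n x a = c a)).card : ℝ)
        * ∏ a, ((k a : ℝ) / n) ^ c a ≤
    ((Finset.univ.filter (fun x : Fin n → A => ∀ a, myCnt n x a = k a)).card : ℝ)
        * ∏ a, ((k a : ℝ) / n) ^ k a := by
  have hnpos : (0:ℝ) < (n:ℝ) ^ n := by positivity
  have key : ∀ (c' : A → ℕ), (∑ a, c' a = n) →
      ∀ (N : ℕ), (N : ℝ) * ∏ a, ((k a : ℝ) / n) ^ c' a = (N * ∏ a, k a ^ c' a : ℕ) / (n:ℝ)^n := by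
    intro c' hc' N
    push_cast
    rw [eq_div_iff (ne_of_gt hnpos)]
    have : ∏ a, ((k a : ℝ) / n) ^ c' a = (∏ a, (k a:ℝ) ^ c' a) / (n:ℝ)^n := by
      rw [← hc', ← Finset.prod_pow_eq_pow_sum]
      rw [← Finset.prod_div_distrib]
      exact Finset.prod_congr rfl fun a _ => div_pow _ _ _
    rw [this]
    field_simp
  rw [key c hc _, key k hk _]
  apply div_le_div_of_nonneg_right ?_ hnpos.le
  exact_mod_cast type_max_nat n c k hc hk

/-- Relative entropy `D(P‖Q)` as an extended real, with `D = +∞` when `P` is not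
absolutely continuous with respect to `Q`. -/
noncomputable def relEntE {A : Type*} [Fintype A] (P Q : A → ℝ) : EReal :=
  if ∀ a, Q a = 0 → P a = 0 then ((∑ a, P a * Real.log (P a / Q a) : ℝ) : EReal) else ⊤

/-- for any `n`-type `P` on `A` with `|A| = m` and any PMF `Q`,
`(n+1)^{-m} e^{-nD(P‖Q)} ≤ Q^n(T(P)) ≤ e^{-nD(P‖Q)}`. -/
theorem type_class_prob_bounds {A : Type*} [Fintype A]
    (n : ℕ) (hn : 0 < n) (P Q : A → ℝ)
    (hP0 : ∀ a, 0 ≤ P a) (hP1 : (∑ a, P a) = 1)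
    (hPtype : ∀ a, ∃ j : ℕ, P a = (j : ℝ) / n)
    (hQ0 : ∀ a, 0 ≤ Q a) (hQ1 : (∑ a, Q a) = 1) :
    (((n + 1 : ℝ≥0∞) ^ (Fintype.card A))⁻¹ * EReal.exp (-(n : EReal) * relEntE P Q)
        ≤ ENNReal.ofReal
          (∑ x ∈ Finset.univ.filter (fun x : Fin n → A => empPMF n x = P), ∏ i, Q (x i))) ∧
    ENNReal.ofReal
        (∑ x ∈ Finset.univ.filter (fun x : Fin n → A => empPMF n x = P), ∏ i, Q (x i))
      ≤ EReal.exp (-(n : EReal) * relEntE P Q) := by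
  classical
  choose k hkP using hPtype
  have hnR : (0:ℝ) < n := by exact_mod_cast hn
  have hsumk : ∑ a, k a = n := by
    have h1 : (∑ a, (k a : ℝ)) / n = 1 := by
      rw [Finset.sum_div, ← hP1]
      exact Finset.sum_congr rfl fun a _ => (hkP a).symm
    have h2 : (∑ a, (k a : ℝ)) = n := by
      field_simp at h1; exact_mod_cast h1
    exact_mod_cast h2
  have hempPMF : ∀ (x : Fin n → A) (a : A), empPMF n x a = (myCnt n x a : ℝ) / n := by
    intro x a; rfl
  -- the type class as a count condition
  have hTset : Finset.univ.filter (fun x : Fin n → A => empPMF n x = P)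
      = Finset.univ.filter (fun x : Fin n → A => ∀ a, myCnt n x a = k a) := by
    apply Finset.filter_congr
    intro x _
    constructor
    · intro h a
      have h1 := congrFun h a
      rw [hempPMF, hkP a, div_eq_div_iff hnR.ne' hnR.ne'] at h1
      have h2 : (myCnt n x a : ℝ) = (k a : ℝ) := mul_right_cancel₀ hnR.ne' h1
      exact_mod_cast h2
    · intro h
      funext a
      rw [hempPMF, h a, hkP a]
  rw [hTset]
  -- the Q-probability of the type class
  have hSQ : ∑ x ∈ Finset.univ.filter (fun x : Fin n → A => ∀ a, myCnt n x a = k a),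
      ∏ i, Q (x i)
      = ((Finset.univ.filter (fun x : Fin n → A => ∀ a, myCnt n x a = k a)).card : ℝ)
        * ∏ a, Q a ^ k a := by
    have hterm : ∀ x ∈ Finset.univ.filter (fun x : Fin n → A => ∀ a, myCnt n x a = k a),
        ∏ i, Q (x i) = ∏ a, Q a ^ k a := fun x hx => by
      rw [prod_comp_myCnt n x Q]
      exact Finset.prod_congr rfl fun a _ => by rw [(Finset.mem_filter.mp hx).2 a]
    rw [Finset.sum_congr rfl hterm, Finset.sum_const, nsmul_eq_mul]
  have hSP : ∑ x ∈ Finset.univ.filter (fun x : Fin n → A => ∀ a, myCnt n x a = k a),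
      ∏ i, P (x i)
      = ((Finset.univ.filter (fun x : Fin n → A => ∀ a, myCnt n x a = k a)).card : ℝ)
        * ∏ a, P a ^ k a := by
    have hterm : ∀ x ∈ Finset.univ.filter (fun x : Fin n → A => ∀ a, myCnt n x a = k a),
        ∏ i, P (x i) = ∏ a, P a ^ k a := fun x hx => by
      rw [prod_comp_myCnt n x P]
      exact Finset.prod_congr rfl fun a _ => by rw [(Finset.mem_filter.mp hx).2 a]
    rw [Finset.sum_congr rfl hterm, Finset.sum_const, nsmul_eq_mul]
  set t : ℝ := ((Finset.univ.filter (fun x : Fin n → A => ∀ a, myCnt n x a = k a)).card : ℝ)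
    * ∏ a, P a ^ k a with ht_def
  have ht0 : 0 ≤ t := by
    apply mul_nonneg (Nat.cast_nonneg _)
    exact Finset.prod_nonneg fun a _ => pow_nonneg (hP0 a) _
  by_cases habs : ∀ a, Q a = 0 → P a = 0
  · -- absolutely continuous case
    set D : ℝ := ∑ a, P a * Real.log (P a / Q a) with hD_def
    have hrel : relEntE P Q = (D : EReal) := if_pos habs
    have hexp : EReal.exp (-(n : EReal) * relEntE P Q)
        = ENNReal.ofReal (Real.exp (-(n:ℝ) * D)) := by
      rw [hrel]
      have : (-(n : EReal) * (D : EReal)) = ((-(n:ℝ) * D : ℝ) : EReal) := by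
        rw [neg_mul, EReal.coe_mul, EReal.coe_neg, EReal.coe_coe_eq_natCast, ← neg_mul]
      rw [this, EReal.exp_coe]
    -- Claim A : ∏ Q^k = exp(-nD) * ∏ P^k
    have claimA : ∏ a, Q a ^ k a = Real.exp (-(n:ℝ) * D) * ∏ a, P a ^ k a := by
      have hfac : ∀ a, Q a ^ k a
          = Real.exp (-((k a : ℝ) * Real.log (P a / Q a))) * P a ^ k a := by
        intro a
        by_cases hk0 : k a = 0
        · simp [hk0]
        · have hPa : 0 < P a := by
            rw [hkP a]
            have : (0:ℝ) < (k a : ℝ) := by exact_mod_cast Nat.pos_of_ne_zero hk0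
            positivity
          have hQa : 0 < Q a := by
            rcases (hQ0 a).lt_or_eq with h | h
            · exact h
            · exact absurd (habs a h.symm) hPa.ne'
          rw [Real.log_div hPa.ne' hQa.ne', mul_sub, neg_sub, Real.exp_sub,
            Real.exp_nat_mul, Real.exp_nat_mul, Real.exp_log hQa, Real.exp_log hPa]
          rw [div_mul_cancel₀ _ (pow_ne_zero _ hPa.ne')]
      have hka : ∀ a, (k a : ℝ) = (n:ℝ) * P a := by
        intro a; rw [hkP a]; field_simp
      have hexp_eq : ∑ a, -((k a : ℝ) * Real.log (P a / Q a)) = -(n:ℝ) * D := by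
        calc ∑ a, -((k a : ℝ) * Real.log (P a / Q a))
            = ∑ a, (-(n:ℝ)) * (P a * Real.log (P a / Q a)) :=
              Finset.sum_congr rfl fun a _ => by rw [hka a]; ring
          _ = -(n:ℝ) * D := by rw [hD_def, Finset.mul_sum]
      rw [Finset.prod_congr rfl fun a _ => hfac a, Finset.prod_mul_distrib,
        ← Real.exp_sum, hexp_eq]
    -- Claim B : t ≤ 1
    have claimB : t ≤ 1 := by
      rw [← hSP]
      have h1 : ∑ x : Fin n → A, ∏ i, P (x i) = 1 := by
        have := Finset.prod_univ_sum (fun _ : Fin n => (Finset.univ : Finset A))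
          (fun _ a => P a)
        rw [Fintype.piFinset_univ] at this
        rw [← this, hP1, Finset.prod_const_one]
      rw [← h1]
      apply Finset.sum_le_sum_of_subset_of_nonneg (Finset.subset_univ _)
      intro x _ _
      exact Finset.prod_nonneg fun i _ => hP0 (x i)
    -- Claim C : 1 ≤ (n+1)^m * t
    have claimC : 1 ≤ ((n:ℝ) + 1) ^ (Fintype.card A) * t := by
      have hcnt_le : ∀ (x : Fin n → A) (a : A), myCnt n x a < n + 1 := by
        intro x a
        have : myCnt n x a ≤ (Finset.univ : Finset (Fin n)).card :=
          Finset.card_filter_le _ _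
        simpa using Nat.lt_succ_of_le (by simpa using this)
      set τ : (Fin n → A) → (A → Fin (n+1)) :=
        fun x a => ⟨myCnt n x a, hcnt_le x a⟩ with hτ
      have hdecomp := Finset.sum_fiberwise_of_maps_to (s := (Finset.univ : Finset (Fin n → A)))
        (t := (Finset.univ : Finset (A → Fin (n+1)))) (g := τ)
        (fun x _ => Finset.mem_univ _) (fun x => ∏ i, P (x i))
      have h1 : ∑ x : Fin n → A, ∏ i, P (x i) = 1 := by
        have := Finset.prod_univ_sum (fun _ : Fin n => (Finset.univ : Finset A))
          (fun _ a => P a)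
        rw [Fintype.piFinset_univ] at this
        rw [← this, hP1, Finset.prod_const_one]
      have hinner : ∀ c : A → Fin (n+1),
          ∑ x ∈ Finset.univ.filter (fun x : Fin n → A => τ x = c), ∏ i, P (x i) ≤ t := by
        intro c
        by_cases hne : (Finset.univ.filter (fun x : Fin n → A => τ x = c)).Nonempty
        · obtain ⟨x₁, hx₁⟩ := hne
          have hx₁c : ∀ a, myCnt n x₁ a = (c a : ℕ) := by
            intro a
            have := congrFun (Finset.mem_filter.mp hx₁).2 a
            exact congrArg Fin.val this
          have hsumc : ∑ a, (c a : ℕ) = n := by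
            rw [← Finset.sum_congr rfl fun a _ => hx₁c a]
            exact sum_myCnt n x₁
          have hfilter_eq : Finset.univ.filter (fun x : Fin n → A => τ x = c)
              = Finset.univ.filter (fun x : Fin n → A => ∀ a, myCnt n x a = (c a : ℕ)) := by
            apply Finset.filter_congr
            intro x _
            constructor
            · intro h a; exact congrArg Fin.val (congrFun h a)
            · intro h; funext a; exact Fin.ext (h a)
          rw [hfilter_eq]
          have hterm : ∀ x ∈ Finset.univ.filter
              (fun x : Fin n → A => ∀ a, myCnt n x a = (c a : ℕ)),
              ∏ i, P (x i) = ∏ a, P a ^ (c a : ℕ) := by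
            intro x hx
            rw [prod_comp_myCnt n x P]
            exact Finset.prod_congr rfl fun a _ => by rw [(Finset.mem_filter.mp hx).2 a]
          rw [Finset.sum_congr rfl hterm, Finset.sum_const, nsmul_eq_mul]
          have hmax := type_max_real n hn (fun a => (c a : ℕ)) k hsumc hsumk
          have hprodc : ∏ a, P a ^ (c a : ℕ) = ∏ a, ((k a : ℝ)/n) ^ (c a : ℕ) :=
            Finset.prod_congr rfl fun a _ => by rw [hkP a]
          have hprodk : (∏ a, P a ^ k a) = ∏ a, ((k a : ℝ)/n) ^ k a :=
            Finset.prod_congr rfl fun a _ => by rw [hkP a]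
          calc (((Finset.univ.filter (fun x : Fin n → A =>
                ∀ a, myCnt n x a = (c a : ℕ))).card : ℝ)) * ∏ a, P a ^ (c a : ℕ)
              = (((Finset.univ.filter (fun x : Fin n → A =>
                ∀ a, myCnt n x a = (c a : ℕ))).card : ℝ)) * ∏ a, ((k a : ℝ)/n) ^ (c a : ℕ) := by
                rw [hprodc]
            _ ≤ (((Finset.univ.filter (fun x : Fin n → A =>
                ∀ a, myCnt n x a = k a)).card : ℝ)) * ∏ a, ((k a : ℝ)/n) ^ (k a) := hmax
            _ = t := by rw [ht_def, hprodk]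
        · rw [Finset.not_nonempty_iff_eq_empty] at hne
          rw [hne, Finset.sum_empty]
          exact ht0
      calc (1:ℝ) = ∑ x : Fin n → A, ∏ i, P (x i) := h1.symm
        _ = ∑ c : A → Fin (n+1), ∑ x ∈ Finset.univ.filter
              (fun x : Fin n → A => τ x = c), ∏ i, P (x i) := hdecomp.symm
        _ ≤ ∑ _c : A → Fin (n+1), t := Finset.sum_le_sum fun c _ => hinner c
        _ = ((n:ℝ) + 1) ^ (Fintype.card A) * t := by
            rw [Finset.sum_const, nsmul_eq_mul, Finset.card_univ, Fintype.card_fun,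
              Fintype.card_fin]
            push_cast
            ring
    -- now the two bounds
    have hS_eq : ∑ x ∈ Finset.univ.filter (fun x : Fin n → A => ∀ a, myCnt n x a = k a),
        ∏ i, Q (x i) = Real.exp (-(n:ℝ) * D) * t := by
      rw [hSQ, claimA, ht_def]; ring
    rw [hS_eq, hexp]
    constructor
    · -- lower bound
      have h0 : ((n:ℝ≥0∞) + 1) ^ (Fintype.card A) ≠ 0 := by
        apply pow_ne_zero; simp
      have htop : ((n:ℝ≥0∞) + 1) ^ (Fintype.card A) ≠ ⊤ := ENNReal.pow_ne_top (by simp)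
      rw [ENNReal.inv_mul_le_iff h0 htop]
      have hpow : ((n:ℝ≥0∞) + 1) ^ (Fintype.card A)
          = ENNReal.ofReal (((n:ℝ) + 1) ^ (Fintype.card A)) := by
        rw [ENNReal.ofReal_pow (by positivity)]
        congr 1
        rw [ENNReal.ofReal_add (by positivity) zero_le_one]
        simp
      rw [hpow, ← ENNReal.ofReal_mul (by positivity)]
      apply ENNReal.ofReal_le_ofReal
      calc Real.exp (-(n:ℝ) * D) = Real.exp (-(n:ℝ) * D) * 1 := by ring
        _ ≤ Real.exp (-(n:ℝ) * D) * (((n:ℝ) + 1) ^ (Fintype.card A) * t) :=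
            mul_le_mul_of_nonneg_left claimC (Real.exp_nonneg _)
        _ = ((n:ℝ) + 1) ^ (Fintype.card A) * (Real.exp (-(n:ℝ) * D) * t) := by ring
    · -- upper bound
      apply ENNReal.ofReal_le_ofReal
      calc Real.exp (-(n:ℝ) * D) * t ≤ Real.exp (-(n:ℝ) * D) * 1 :=
          mul_le_mul_of_nonneg_left claimB (Real.exp_nonneg _)
        _ = Real.exp (-(n:ℝ) * D) := by ring
  · -- singular case : relative entropy is infinite
    have hrel : relEntE P Q = ⊤ := if_neg habs
    have hneg : (-(n:EReal)) < 0 := by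
      have h1 : (0:EReal) < (n:EReal) := by exact_mod_cast hn
      rw [← neg_zero]
      exact EReal.neg_strictAnti h1
    rw [hrel, EReal.mul_top_of_neg hneg, EReal.exp_bot]
    push_neg at habs
    obtain ⟨a₀, hQa₀, hPa₀⟩ := habs
    have hka₀ : k a₀ ≠ 0 := by
      intro h
      apply hPa₀
      rw [hkP a₀, h]; simp
    have hzero : ∑ x ∈ Finset.univ.filter (fun x : Fin n → A => ∀ a, myCnt n x a = k a),
        ∏ i, Q (x i) = 0 := by
      apply Finset.sum_eq_zero
      intro x hx
      rw [prod_comp_myCnt n x Q]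
      apply Finset.prod_eq_zero (Finset.mem_univ a₀)
      rw [(Finset.mem_filter.mp hx).2 a₀, hQa₀]
      exact zero_pow hka₀
    rw [hzero]
    simp
end

section
/- If X_1,...,X_n are exchangeable random variables with values in a finite alphabet A, then for every a ∈ A, the conditional probability P(X_1 = a | P̂_{X_1^n}) equals P̂_{X_1^n}(a) almost surely, where P̂_{X_1^n} is the empirical PMF of (X_1,...,X_n). Consequently, the distribution of X_1 equals the mixture ∫ Q(·) dμ(Q), where μ is the law of P̂_{X_1^n}. -/
open scoped Classical BigOperators

lemma sum_ite_irrel {α : Type*} [Fintype α] {P Q : α → Prop}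
    {i1 : ∀ x, Decidable (P x)} {i2 : ∀ x, Decidable (Q x)}
    (h : ∀ x, P x ↔ Q x) (f : α → ℝ) :
    (∑ x, @ite ℝ (P x) (i1 x) (f x) 0) = ∑ x, @ite ℝ (Q x) (i2 x) (f x) 0 :=
  Finset.sum_congr rfl fun x _ => if_congr (h x) rfl rfl

lemma empPMF_comp {A : Type*} [Fintype A] (n : ℕ) (x : Fin n → A) (σ : Equiv.Perm (Fin n)) :
    empPMF n (x ∘ σ) = empPMF n x := by
  funext a
  unfold empPMF
  congr 2
  exact Finset.card_bij (fun i _ => σ i) (fun i hi => by simpa using hi)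
    (fun _ _ _ _ h => σ.injective h)
    (fun j hj => ⟨σ.symm j, by simpa using hj, by simp⟩)

lemma sum_comp_perm {A : Type*} [Fintype A] (n : ℕ) (σ : Equiv.Perm (Fin n))
    (F : (Fin n → A) → ℝ) : ∑ x, F (x ∘ σ) = ∑ x, F x :=
  Fintype.sum_bijective (fun x => x ∘ σ)
    (Equiv.arrowCongr σ.symm (Equiv.refl A)).bijective _ _ (fun _ => rfl)

lemma key_swap {A : Type*} [Fintype A] (n : ℕ) (hn : 0 < n) (p : (Fin n → A) → ℝ)
    (hexch : ∀ (π : Equiv.Perm (Fin n)) (x : Fin n → A), p (x ∘ π) = p x)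
    (i : Fin n) (C : A → (A → ℝ) → Prop) :
    (∑ x, if C (x i) (empPMF n x) then p x else 0)
      = ∑ x, if C (x ⟨0, hn⟩) (empPMF n x) then p x else 0 := by
  set σ := Equiv.swap (⟨0, hn⟩ : Fin n) i
  rw [← sum_comp_perm n σ (fun x => if C (x ⟨0, hn⟩) (empPMF n x) then p x else 0)]
  refine Finset.sum_congr rfl fun x _ => ?_
  simp only [Function.comp_apply, empPMF_comp, hexch, σ, Equiv.swap_apply_left]

/-- for exchangeable `X_1,…,X_n` with values in a finite alphabet,
`P(X_1 = a | P̂_{X_1^n} = Q) = Q(a)` (for any `Q` of positive probability, which is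
the discrete form of the a.s. statement), and consequently the law of `X_1` is the
mixture `∫ Q(·) dμ(Q)` where `μ` is the law of the empirical measure `P̂_{X_1^n}`. -/
theorem cond_law_first_coord_eq_type {A : Type*} [Fintype A]
    (n : ℕ) (hn : 0 < n) (p : (Fin n → A) → ℝ)
    (hp0 : ∀ x, 0 ≤ p x) (hp1 : (∑ x, p x) = 1)
    (hexch : ∀ (π : Equiv.Perm (Fin n)) (x : Fin n → A), p (x ∘ π) = p x) :
    (∀ (Q : A → ℝ), (∑ x, if empPMF n x = Q then p x else 0) ≠ 0 →
      ∀ a : A, (∑ x, if x ⟨0, hn⟩ = a ∧ empPMF n x = Q then p x else 0)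
        = Q a * (∑ x, if empPMF n x = Q then p x else 0)) ∧
    (∀ a : A, (∑ x, if x ⟨0, hn⟩ = a then p x else 0) = ∑ x, p x * empPMF n x a) := by
  have hn' : (n : ℝ) ≠ 0 := Nat.cast_ne_zero.mpr hn.ne'
  have main : ∀ (c : (A → ℝ) → Prop) (a : A),
      (n : ℝ) * (∑ x, if x (⟨0, hn⟩ : Fin n) = a ∧ c (empPMF n x) then p x else 0)
        = ∑ x : Fin n → A, (if c (empPMF n x) then
            ((Finset.univ.filter (fun i : Fin n => x i = a)).card : ℝ) * p x else 0) := by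
    intro c a
    have h1 : ∀ i : Fin n, (∑ x, if x i = a ∧ c (empPMF n x) then p x else 0)
        = ∑ x, if x (⟨0, hn⟩ : Fin n) = a ∧ c (empPMF n x) then p x else 0 :=
      fun i => (sum_ite_irrel (fun x => Iff.rfl) p).trans
        ((key_swap n hn p hexch i (fun b Q => b = a ∧ c Q)).trans
          (sum_ite_irrel (fun x => Iff.rfl) p))
    have h2 : ∑ i : Fin n, (∑ x, if x i = a ∧ c (empPMF n x) then p x else 0)
        = (n : ℝ) * (∑ x, if x (⟨0, hn⟩ : Fin n) = a ∧ c (empPMF n x) then p x else 0) := by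
      rw [Finset.sum_congr rfl (fun i _ => h1 i), Finset.sum_const, Finset.card_univ,
        Fintype.card_fin, nsmul_eq_mul]
    rw [← h2, Finset.sum_comm]
    refine Finset.sum_congr rfl fun x _ => ?_
    by_cases hc : c (empPMF n x)
    · simp only [hc, and_true, Finset.sum_ite, Finset.sum_const, Finset.sum_const_zero,
        nsmul_eq_mul, mul_zero, add_zero, if_true]
    · simp [hc]
  constructor
  · intro Q _ a
    apply mul_left_cancel₀ hn'
    have hm := main (fun Q' => Q' = Q) a
    have key1 : (n : ℝ) * (∑ x, if x (⟨0, hn⟩ : Fin n) = a ∧ empPMF n x = Q then p x else 0)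
        = ∑ x : Fin n → A, (if empPMF n x = Q then
            ((Finset.univ.filter (fun i : Fin n => x i = a)).card : ℝ) * p x else 0) :=
      (congrArg (HMul.hMul (n : ℝ)) (sum_ite_irrel (fun x => Iff.rfl) p)).trans
        (hm.trans (sum_ite_irrel (fun x => Iff.rfl)
          (fun x => ((Finset.univ.filter (fun i : Fin n => x i = a)).card : ℝ) * p x)))
    rw [key1]
    have step : ∀ x : Fin n → A,
        (if empPMF n x = Q then
            ((Finset.univ.filter (fun i : Fin n => x i = a)).card : ℝ) * p x else 0)
          = (n : ℝ) * (Q a * (if empPMF n x = Q then p x else 0)) := by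
      intro x
      by_cases hx : empPMF n x = Q
      · have hQa : ((Finset.univ.filter (fun i : Fin n => x i = a)).card : ℝ)
            = (n : ℝ) * Q a := by
          have h := congrFun hx a
          unfold empPMF at h
          field_simp at h
          linarith [h]
        simp [hx, hQa, mul_assoc]
      · simp [hx]
    rw [Finset.sum_congr rfl (fun x _ => step x), ← Finset.mul_sum, ← Finset.mul_sum]
  · intro a
    apply mul_left_cancel₀ hn'
    have hm := main (fun _ => True) a
    have e1 : (n : ℝ) * (∑ x, if x (⟨0, hn⟩ : Fin n) = a then p x else 0)
        = ∑ x : Fin n → A, ((Finset.univ.filter (fun i : Fin n => x i = a)).card : ℝ) * p x := by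
      refine (congrArg (HMul.hMul (n : ℝ))
        (sum_ite_irrel (fun x => (and_iff_left trivial).symm) p)).trans (hm.trans ?_)
      exact Finset.sum_congr rfl fun x _ => if_pos trivial
    rw [e1, Finset.mul_sum]
    refine Finset.sum_congr rfl fun x _ => ?_
    unfold empPMF
    field_simp
end

section
/- Let Q be a PMF on a finite alphabet A and k ≥ 1. Among all probability distributions W on A^k whose k one-dimensional marginals average to Q (i.e. (1/k)∑_{j=1}^k W_j = Q), the unique minimizer of D(W‖U_k), where U_k is the uniform distribution on A^k, is the product distribution Q^k, and the minimum value is k log m − k H(Q) where m = |A|. -/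
open scoped Classical BigOperators

/-- The `j`-th one-dimensional marginal of a distribution `W` on `A^k`. -/
noncomputable def marginal {A : Type*} [Fintype A] (k : ℕ) (W : (Fin k → A) → ℝ)
    (j : Fin k) (a : A) : ℝ :=
  ∑ y : Fin k → A, if y j = a then W y else 0

/-- Relative entropy (natural log), finite-sum form. -/
noncomputable def relEnt {A : Type*} [Fintype A] (P Q : A → ℝ) : ℝ :=
  ∑ a, P a * Real.log (P a / Q a)

/-- Expectation of a function of a single coordinate under a product measure. -/
lemma aux_sum_coord {A : Type*} [Fintype A] (k : ℕ) (j : Fin k) (g Q : A → ℝ)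
    (hQ1 : (∑ a, Q a) = 1) :
    ∑ y : Fin k → A, g (y j) * ∏ i, Q (y i) = ∑ a, g a * Q a := by
  have h1 : ∀ y : Fin k → A, g (y j) * ∏ i, Q (y i)
      = ∏ i, (if i = j then g (y i) * Q (y i) else Q (y i)) := by
    intro y
    rw [← Finset.mul_prod_erase Finset.univ (fun i => Q (y i)) (Finset.mem_univ j),
      ← Finset.mul_prod_erase Finset.univ
        (fun i => if i = j then g (y i) * Q (y i) else Q (y i)) (Finset.mem_univ j)]
    simp only [if_pos rfl]
    rw [← mul_assoc]
    congr 1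
    apply Finset.prod_congr rfl
    intro i hi
    rw [if_neg (Finset.ne_of_mem_erase hi)]
  rw [Finset.sum_congr rfl (fun y _ => h1 y), ← Fintype.piFinset_univ,
    ← Finset.prod_univ_sum (fun _ => (Finset.univ : Finset A))
      (fun i b => if i = j then g b * Q b else Q b)]
  rw [Finset.prod_eq_single j]
  · simp
  · intro i _ hij
    simp [if_neg hij, hQ1]
  · simp

/-- The marginals of the product distribution are `Q`. -/
lemma marginal_prod {A : Type*} [Fintype A] (k : ℕ) (j : Fin k) (Q : A → ℝ) (a : A)
    (hQ1 : (∑ a, Q a) = 1) :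
    marginal k (fun y => ∏ i, Q (y i)) j a = Q a := by
  unfold marginal
  have : ∀ y : Fin k → A, (if y j = a then (∏ i, Q (y i)) else 0)
      = (if y j = a then (1:ℝ) else 0) * ∏ i, Q (y i) := by
    intro y; split <;> simp
  rw [Finset.sum_congr rfl (fun y _ => this y),
    aux_sum_coord k j (fun b => if b = a then (1:ℝ) else 0) Q hQ1]
  simp

/-- Pairing a function of one coordinate against `W` via the marginal. -/
lemma marginal_pair {A : Type*} [Fintype A] (k : ℕ) (j : Fin k)
    (W : (Fin k → A) → ℝ) (f : A → ℝ) :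
    ∑ y : Fin k → A, W y * f (y j) = ∑ a, marginal k W j a * f a := by
  unfold marginal
  symm
  calc ∑ a, (∑ y : Fin k → A, if y j = a then W y else 0) * f a
      = ∑ a, ∑ y : Fin k → A, (if y j = a then W y * f a else 0) := by
        refine Finset.sum_congr rfl fun a _ => ?_
        rw [Finset.sum_mul]
        refine Finset.sum_congr rfl fun y _ => ?_
        split <;> simp
    _ = ∑ y : Fin k → A, ∑ a, (if y j = a then W y * f a else 0) := Finset.sum_comm
    _ = ∑ y, W y * f (y j) := by
        refine Finset.sum_congr rfl fun y _ => ?_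
        simp

lemma relEnt_split {X : Type*} [Fintype X] (W P : X → ℝ)
    (h : ∀ x, P x = 0 → W x = 0) :
    relEnt W P = (∑ x, W x * Real.log (W x)) - ∑ x, W x * Real.log (P x) := by
  unfold relEnt
  rw [← Finset.sum_sub_distrib]
  apply Finset.sum_congr rfl
  intro x _
  by_cases hw : W x = 0
  · simp [hw]
  · have hp : P x ≠ 0 := fun h0 => hw (h x h0)
    rw [Real.log_div hw hp]; ring


lemma support_of_constraint {A : Type*} [Fintype A] (k : ℕ) (hk : (k:ℝ) ≠ 0)
    (Q : A → ℝ) (W : (Fin k → A) → ℝ) (hW0 : ∀ y, 0 ≤ W y)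
    (hconstr : ∀ a, (∑ j : Fin k, marginal k W j a) / k = Q a) :
    ∀ y : Fin k → A, ∀ i, Q (y i) = 0 → W y = 0 := by
  intro y i hQi
  have hsum : ∑ j : Fin k, marginal k W j (y i) = 0 := by
    have h := hconstr (y i)
    rw [hQi, div_eq_zero_iff] at h
    exact h.resolve_right hk
  have hmnn : ∀ j : Fin k, 0 ≤ marginal k W j (y i) := by
    intro j
    refine Finset.sum_nonneg fun z _ => ?_
    split
    · exact hW0 z
    · exact le_refl 0
  have hme : marginal k W i (y i) = 0 :=
    (Finset.sum_eq_zero_iff_of_nonneg (fun j _ => hmnn j)).mp hsum i (Finset.mem_univ i)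
  have := (Finset.sum_eq_zero_iff_of_nonneg (fun z _ => by
      split
      · exact hW0 z
      · exact le_refl 0)).mp hme y (Finset.mem_univ y)
  simpa using this

lemma gibbs {X : Type*} [Fintype X] (W P : X → ℝ) (hW0 : ∀ x, 0 ≤ W x)
    (hW1 : ∑ x, W x = 1) (hP0 : ∀ x, 0 ≤ P x) (hP1 : ∑ x, P x = 1)
    (h : ∀ x, P x = 0 → W x = 0) :
    0 ≤ relEnt W P ∧ (relEnt W P = 0 → W = P) := by
  have key : ∀ x, W x - P x ≤ W x * Real.log (W x / P x) ∧
      (W x * Real.log (W x / P x) = W x - P x → W x = P x) := by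
    intro x
    by_cases hw : W x = 0
    · constructor
      · rw [hw]; simp [hP0 x]
      · intro heq
        rw [hw] at heq ⊢
        simp at heq
        linarith
    · have hwpos : 0 < W x := lt_of_le_of_ne (hW0 x) (Ne.symm hw)
      have hppos : 0 < P x := lt_of_le_of_ne (hP0 x) (fun h0 => hw (h x h0.symm))
      have ht : 0 < P x / W x := div_pos hppos hwpos
      have hlog : Real.log (W x / P x) = -Real.log (P x / W x) := by
        rw [← Real.log_inv]
        congr 1
        rw [inv_div]
      have hPW : W x * (P x / W x) = P x := by field_simp
      constructor
      · have hle : Real.log (P x / W x) ≤ P x / W x - 1 :=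
          Real.log_le_sub_one_of_pos ht
        have := mul_le_mul_of_nonneg_left hle (le_of_lt hwpos)
        rw [hlog]
        nlinarith
      · intro heq
        by_contra hne
        have hne' : P x / W x ≠ 1 := by
          intro h1
          apply hne
          field_simp at h1
          linarith
        have hlt : Real.log (P x / W x) < P x / W x - 1 :=
          Real.log_lt_sub_one_of_pos ht hne'
        have := mul_lt_mul_of_pos_left hlt hwpos
        rw [hlog] at heq
        nlinarith
  have hge : ∀ x ∈ Finset.univ, (0:ℝ) ≤ W x * Real.log (W x / P x) - (W x - P x) :=
    fun x _ => sub_nonneg.mpr (key x).1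
  have hsplit : ∑ x, (W x * Real.log (W x / P x) - (W x - P x)) = relEnt W P := by
    rw [Finset.sum_sub_distrib, Finset.sum_sub_distrib, hW1, hP1]
    simp [relEnt]
  constructor
  · have := Finset.sum_nonneg hge
    rw [hsplit] at this
    exact this
  · intro h0
    funext x
    have hz := (Finset.sum_eq_zero_iff_of_nonneg hge).mp (by rw [hsplit, h0]) x
      (Finset.mem_univ x)
    exact (key x).2 (by linarith)

lemma sum_W_logprod {A : Type*} [Fintype A] (k : ℕ) (hk : (k:ℝ) ≠ 0)
    (Q : A → ℝ) (W : (Fin k → A) → ℝ)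
    (hsupp : ∀ y : Fin k → A, ∀ i, Q (y i) = 0 → W y = 0)
    (hconstr : ∀ a, (∑ j : Fin k, marginal k W j a) / k = Q a) :
    ∑ y : Fin k → A, W y * Real.log (∏ i, Q (y i))
      = k * ∑ a, Q a * Real.log (Q a) := by
  have step1 : ∀ y : Fin k → A, W y * Real.log (∏ i, Q (y i))
      = ∑ i : Fin k, W y * Real.log (Q (y i)) := by
    intro y
    by_cases hz : ∀ i, Q (y i) ≠ 0
    · rw [Real.log_prod fun i _ => hz i, Finset.mul_sum]
    · push_neg at hz
      obtain ⟨i, hi⟩ := hz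
      have hy := hsupp y i hi
      simp [hy]
  rw [Finset.sum_congr rfl fun y _ => step1 y, Finset.sum_comm]
  have step2 : ∀ i : Fin k, ∑ y : Fin k → A, W y * Real.log (Q (y i))
      = ∑ a, marginal k W i a * Real.log (Q a) :=
    fun i => marginal_pair k i W (fun a => Real.log (Q a))
  rw [Finset.sum_congr rfl fun i _ => step2 i, Finset.sum_comm]
  have hm : ∀ a, ∑ i : Fin k, marginal k W i a = k * Q a := by
    intro a
    have h := hconstr a
    rw [div_eq_iff hk] at h
    rw [h]; ring
  rw [Finset.mul_sum]
  refine Finset.sum_congr rfl fun a _ => ?_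
  rw [← Finset.sum_mul, hm a]
  ring

/-- among all `W` on `A^k` with `(1/k)∑_j W_j = Q`, the unique minimizer
of `D(W‖U_k)` (`U_k` uniform on `A^k`) is the product `Q^k`, with minimum value
`k log m − k H(Q)`. -/
theorem product_minimizes_relEnt_to_uniform {A : Type*} [Fintype A] [Nonempty A]
    (k : ℕ) (hk : 1 ≤ k) (Q : A → ℝ) (hQ0 : ∀ a, 0 ≤ Q a) (hQ1 : (∑ a, Q a) = 1)
    (U : (Fin k → A) → ℝ) (hU : ∀ y, U y = ((Fintype.card A : ℝ) ^ k)⁻¹) :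
    (∀ a : A, (∑ j : Fin k, marginal k (fun y => ∏ i, Q (y i)) j a) / k = Q a) ∧
    relEnt (fun y : Fin k → A => ∏ i, Q (y i)) U
      = k * Real.log (Fintype.card A) - k * shannonEntropy Q ∧
    (∀ W : (Fin k → A) → ℝ, (∀ y, 0 ≤ W y) → (∑ y, W y) = 1 →
      (∀ a : A, (∑ j : Fin k, marginal k W j a) / k = Q a) →
      (relEnt (fun y : Fin k → A => ∏ i, Q (y i)) U ≤ relEnt W U ∧
        (relEnt W U = relEnt (fun y : Fin k → A => ∏ i, Q (y i)) U →
          W = fun y : Fin k → A => ∏ i, Q (y i)))) := by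
  have hk0 : (k:ℝ) ≠ 0 := Nat.cast_ne_zero.mpr (by omega)
  have hcard1 : (1:ℝ) ≤ (Fintype.card A : ℝ) := by exact_mod_cast Fintype.card_pos
  have hU0 : ∀ y : Fin k → A, U y ≠ 0 := by
    intro y
    rw [hU y]
    positivity
  set P : (Fin k → A) → ℝ := fun y => ∏ i, Q (y i) with hPdef
  have hP0 : ∀ y, 0 ≤ P y := fun y => Finset.prod_nonneg fun i _ => hQ0 (y i)
  have hP1 : ∑ y, P y = 1 := by
    rw [show ∑ y : Fin k → A, P y
        = ∑ y ∈ Fintype.piFinset (fun _ : Fin k => (Finset.univ : Finset A)),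
            ∏ i, Q (y i) from by rw [Fintype.piFinset_univ],
      ← Finset.prod_univ_sum]
    simp [hQ1]
  have hc1 : ∀ a : A, (∑ j : Fin k, marginal k P j a) / k = Q a := by
    intro a
    rw [Finset.sum_congr rfl fun j _ => marginal_prod k j Q a hQ1,
      Finset.sum_const, Finset.card_univ, Fintype.card_fin, nsmul_eq_mul]
    field_simp
  have hlogU : ∀ y : Fin k → A, Real.log (U y)
      = -(k * Real.log (Fintype.card A)) := by
    intro y
    rw [hU y, Real.log_inv, Real.log_pow]
  have main : ∀ W : (Fin k → A) → ℝ, (∀ y, 0 ≤ W y) → (∑ y, W y) = 1 →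
      (∀ a : A, (∑ j : Fin k, marginal k W j a) / k = Q a) →
      relEnt W U = relEnt W P
        + (k * Real.log (Fintype.card A) - k * shannonEntropy Q) ∧
      (∀ y, P y = 0 → W y = 0) := by
    intro W hW0 hW1 hconstr
    have hsupp := support_of_constraint k hk0 Q W hW0 hconstr
    have hPW : ∀ y, P y = 0 → W y = 0 := by
      intro y hy
      rw [hPdef] at hy
      rw [Finset.prod_eq_zero_iff] at hy
      obtain ⟨i, _, hi⟩ := hy
      exact hsupp y i hi
    refine ⟨?_, hPW⟩
    rw [relEnt_split W U (fun y hy => absurd hy (hU0 y)), relEnt_split W P hPW]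
    have hsumU : ∑ y, W y * Real.log (U y)
        = -(k * Real.log (Fintype.card A)) := by
      rw [Finset.sum_congr rfl fun y _ => by rw [hlogU y], ← Finset.sum_mul, hW1,
        one_mul]
    have hsumP : ∑ y, W y * Real.log (P y) = k * ∑ a, Q a * Real.log (Q a) :=
      sum_W_logprod k hk0 Q W hsupp hconstr
    rw [hsumU, hsumP]
    unfold shannonEntropy
    ring
  have hPP : relEnt P P = 0 := by
    unfold relEnt
    apply Finset.sum_eq_zero
    intro y _
    by_cases hy : P y = 0
    · simp [hy]
    · rw [div_self hy, Real.log_one, mul_zero]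
  have hval : relEnt P U = k * Real.log (Fintype.card A) - k * shannonEntropy Q := by
    rw [(main P hP0 hP1 hc1).1, hPP]
    ring
  refine ⟨hc1, hval, ?_⟩
  intro W hW0 hW1 hconstr
  obtain ⟨hWU, hPW⟩ := main W hW0 hW1 hconstr
  obtain ⟨hge, heq⟩ := gibbs W P hW0 hW1 hP0 hP1 hPW
  constructor
  · rw [hWU, hval]
    linarith
  · intro h0
    apply heq
    rw [hWU, hval] at h0
    linarith
end

section
/- Let x_1^{kℓ} ∈ A^{kℓ} have type Q, let V_1^{kℓ} be a uniformly random permutation of x_1^{kℓ}. Then for any a_1^k ∈ A^k, P(V_1^k = a_1^k) ≤ Q^k(a_1^k)·(1 + k/ℓ). -/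
open scoped Classical BigOperators


lemma card_fixing (n k : ℕ) (h : k ≤ n) :
    (Finset.univ.filter (fun τ : Equiv.Perm (Fin n) =>
        ∀ i : Fin k, τ (Fin.castLE h i) = Fin.castLE h i)).card = Nat.factorial (n - k) := by
  classical
  set p : Fin n → Prop := fun j => ∀ i : Fin k, Fin.castLE h i ≠ j with hp
  have hiff : ∀ τ : Equiv.Perm (Fin n),
      (∀ i : Fin k, τ (Fin.castLE h i) = Fin.castLE h i) ↔ (∀ a, ¬ p a → τ a = a) := by
    intro τ
    constructor
    · intro hτ a ha
      obtain ⟨i, hi⟩ := not_forall.1 ha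
      rw [not_ne_iff] at hi
      rw [← hi]; exact hτ i
    · intro hτ i
      exact hτ _ (not_forall.2 ⟨i, not_ne_iff.2 rfl⟩)
  have h1 : (Finset.univ.filter (fun τ : Equiv.Perm (Fin n) =>
      ∀ i : Fin k, τ (Fin.castLE h i) = Fin.castLE h i)).card
      = Fintype.card {f : Equiv.Perm (Fin n) // ∀ a, ¬ p a → f a = a} := by
    rw [Fintype.card_subtype]
    congr 1
    apply Finset.filter_congr
    intro τ _
    simp only [hiff τ]
  rw [h1, ← Fintype.card_congr (Equiv.Perm.subtypeEquivSubtypePerm p), Fintype.card_perm]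
  congr 1
  have hcompl : Fintype.card {a : Fin n // ¬ p a} = k := by
    have heq : ∀ a : Fin n, ¬ p a ↔ a ∈ Finset.image (Fin.castLE h) Finset.univ := by
      intro a
      simp only [hp, Finset.mem_image, Finset.mem_univ, true_and, not_forall, not_ne_iff]
    rw [Fintype.card_subtype]
    rw [show Finset.univ.filter (fun a => ¬ p a) = Finset.image (Fin.castLE h) Finset.univ from
      Finset.ext (fun a => by simp [heq a])]
    rw [Finset.card_image_of_injective _ (Fin.castLE_injective h), Finset.card_univ,
      Fintype.card_fin]
  have h4 := Fintype.card_subtype_compl p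
  have h5 := Fintype.card_subtype_le p
  rw [hcompl, Fintype.card_fin] at h4
  rw [Fintype.card_fin] at h5
  show Fintype.card {a : Fin n // p a} = n - k
  omega


lemma weier' (s : Finset ℕ) (f : ℕ → ℝ) (h0 : ∀ i ∈ s, 0 ≤ f i) (h1 : ∀ i ∈ s, f i ≤ 1) :
    1 - ∑ i ∈ s, f i ≤ ∏ i ∈ s, (1 - f i) := by
  induction s using Finset.induction_on with
  | empty => simp
  | insert _ _ ha ih =>
    rename_i a s
    rw [Finset.sum_insert ha, Finset.prod_insert ha]
    have ih' := ih (fun i hi => h0 i (Finset.mem_insert_of_mem hi))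
      (fun i hi => h1 i (Finset.mem_insert_of_mem hi))
    have hfa0 := h0 a (Finset.mem_insert_self a s)
    have hfa1 := h1 a (Finset.mem_insert_self a s)
    have hs0 : 0 ≤ ∑ i ∈ s, f i :=
      Finset.sum_nonneg (fun i hi => h0 i (Finset.mem_insert_of_mem hi))
    nlinarith [mul_le_mul_of_nonneg_left ih' (by linarith : (0:ℝ) ≤ 1 - f a)]

lemma gauss_sum_real (k : ℕ) : ∑ i ∈ Finset.range k, (i:ℝ) = (k:ℝ) * ((k:ℝ) - 1) / 2 := by
  induction k with
  | zero => simp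
  | succ m ih => rw [Finset.sum_range_succ, ih]; push_cast; ring

lemma key_real (k ℓ : ℕ) (hk : 1 ≤ k) (hl : k ≤ ℓ) :
    ((k * ℓ : ℕ) : ℝ) ^ k ≤ (1 + (k:ℝ)/ℓ) * ∏ i ∈ Finset.range k, (((k*ℓ : ℕ):ℝ) - i) := by
  have hl1 : (1:ℝ) ≤ ℓ := by exact_mod_cast le_trans hk hl
  have hlpos : (0:ℝ) < ℓ := by linarith
  have hkR : (1:ℝ) ≤ k := by exact_mod_cast hk
  have hklR : (k:ℝ) ≤ ℓ := by exact_mod_cast hl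
  set n : ℝ := ((k * ℓ : ℕ) : ℝ) with hn
  have hnval : n = (k:ℝ) * ℓ := by rw [hn]; push_cast; ring
  have hnpos : 0 < n := by rw [hnval]; positivity
  have hprod : ∏ i ∈ Finset.range k, (n - i) = n ^ k * ∏ i ∈ Finset.range k, (1 - i / n) := by
    have : n ^ k = ∏ _i ∈ Finset.range k, n := by
      rw [Finset.prod_const, Finset.card_range]
    rw [this, ← Finset.prod_mul_distrib]
    apply Finset.prod_congr rfl
    intro i _
    field_simp
  have hsum : ∑ i ∈ Finset.range k, ((i:ℝ) / n) = ((k:ℝ) - 1) / (2 * ℓ) := by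
    rw [← Finset.sum_div]
    rw [gauss_sum_real, hnval]
    have hkne : (k:ℝ) ≠ 0 := by linarith
    field_simp
  have hw := weier' (Finset.range k) (fun i => (i:ℝ) / n)
    (fun i _ => by positivity)
    (fun i hi => by
      rw [div_le_one hnpos, hnval]
      have hik : (i:ℝ) < k := by exact_mod_cast Finset.mem_range.1 hi
      nlinarith)
  rw [hprod]
  have hcoef : 1 ≤ (1 + (k:ℝ)/ℓ) * (1 - ((k:ℝ) - 1) / (2 * ℓ)) := by
    rw [show (1 + (k:ℝ)/ℓ) * (1 - ((k:ℝ)-1)/(2*ℓ))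
        = (((ℓ:ℝ) + k) * (2*ℓ - ((k:ℝ)-1))) / ((ℓ:ℝ) * (2*ℓ)) from by field_simp,
      le_div_iff₀ (by positivity)]
    nlinarith [mul_le_mul_of_nonneg_left hklR (by linarith : (0:ℝ) ≤ (k:ℝ))]
  calc n ^ k = n ^ k * 1 := by ring
    _ ≤ n ^ k * ((1 + (k:ℝ)/ℓ) * (1 - ((k:ℝ) - 1) / (2 * ℓ))) := by
        apply mul_le_mul_of_nonneg_left hcoef (by positivity)
    _ ≤ (1 + (k:ℝ)/ℓ) * (n ^ k * ∏ i ∈ Finset.range k, (1 - i / n)) := by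
        rw [← hsum] at *
        have h2 : (0:ℝ) ≤ 1 + (k:ℝ)/ℓ := by positivity
        have h3 : (0:ℝ) ≤ n ^ k := by positivity
        calc n ^ k * ((1 + (k:ℝ)/ℓ) * (1 - ∑ i ∈ Finset.range k, ((i:ℝ) / n)))
            = (1 + (k:ℝ)/ℓ) * (n ^ k * (1 - ∑ i ∈ Finset.range k, ((i:ℝ) / n))) := by ring
          _ ≤ _ := by
              apply mul_le_mul_of_nonneg_left _ h2
              exact mul_le_mul_of_nonneg_left hw h3

lemma card_block (n k : ℕ) (h : k ≤ n) {A : Type*} [Fintype A] (x : Fin n → A) (a : Fin k → A) :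
    ((Finset.univ.filter (fun σ : Equiv.Perm (Fin n) =>
        ∀ i : Fin k, x (σ (Fin.castLE h i)) = a i)).card)
      ≤ (∏ i, (Finset.univ.filter (fun j : Fin n => x j = a i)).card) * Nat.factorial (n - k) := by
  classical
  set S := Finset.univ.filter (fun σ : Equiv.Perm (Fin n) =>
      ∀ i : Fin k, x (σ (Fin.castLE h i)) = a i) with hS
  set F : Finset (Fin k → Fin n) :=
      Fintype.piFinset (fun i => Finset.univ.filter (fun j : Fin n => x j = a i)) with hF
  have hmap : ∀ σ ∈ S, (fun i => σ (Fin.castLE h i)) ∈ F := by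
    intro σ hσ
    rw [hS, Finset.mem_filter] at hσ
    rw [hF, Fintype.mem_piFinset]
    intro i
    simp [hσ.2 i]
  rw [Finset.card_eq_sum_card_fiberwise hmap]
  have hfiber : ∀ f ∈ F, (S.filter (fun σ => (fun i => σ (Fin.castLE h i)) = f)).card
      ≤ Nat.factorial (n - k) := by
    intro f _
    set T := S.filter (fun σ => (fun i => σ (Fin.castLE h i)) = f) with hT
    rcases T.eq_empty_or_nonempty with he | ⟨σ₀, hσ₀⟩
    · simp [he]
    · rw [hT, Finset.mem_filter] at hσ₀
      have hσ₀f : ∀ i, σ₀ (Fin.castLE h i) = f i := fun i => congrFun hσ₀.2 i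
      rw [← card_fixing n k h]
      apply Finset.card_le_card_of_injOn (fun σ => σ₀⁻¹ * σ)
      · intro σ hσ
        rw [hT, Finset.mem_coe, Finset.mem_filter] at hσ
        have hσf : ∀ i, σ (Fin.castLE h i) = f i := fun i => congrFun hσ.2 i
        rw [Finset.mem_coe, Finset.mem_filter]
        refine ⟨Finset.mem_univ _, fun i => ?_⟩
        show σ₀⁻¹ (σ (Fin.castLE h i)) = Fin.castLE h i
        rw [hσf i, ← hσ₀f i, Equiv.Perm.inv_def, Equiv.symm_apply_apply]
      · intro σ1 _ σ2 _ hh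
        exact mul_left_cancel hh
  calc ∑ f ∈ F, (S.filter (fun σ => (fun i => σ (Fin.castLE h i)) = f)).card
      ≤ ∑ _f ∈ F, Nat.factorial (n - k) := Finset.sum_le_sum hfiber
    _ = F.card * Nat.factorial (n - k) := by rw [Finset.sum_const, smul_eq_mul]
    _ = (∏ i, (Finset.univ.filter (fun j : Fin n => x j = a i)).card) * Nat.factorial (n - k) := by
        rw [hF, Fintype.card_piFinset]


lemma final_arith (p f1 nk c D : ℝ) (hp : 0 ≤ p) (hf1 : 0 ≤ f1)
    (hone : 1 ≤ c * D / nk) : p * f1 ≤ p / nk * c * (f1 * D) := by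
  have h := mul_le_mul_of_nonneg_left hone (mul_nonneg hp hf1)
  calc p * f1 = p * f1 * 1 := (mul_one _).symm
    _ ≤ p * f1 * (c * D / nk) := h
    _ = p / nk * c * (f1 * D) := by ring

/-- if `x_1^{kℓ}` has type `Q` and `V_1^{kℓ}` is a uniformly random
permutation of `x_1^{kℓ}`, then `P(V_1^k = a_1^k) ≤ Q^k(a_1^k)·(1 + k/ℓ)`.
The probability is the number of permutations `σ` with `(x∘σ)` starting with `a_1^k`,
divided by `(kℓ)!`; `Q` is the empirical PMF of `x`. -/
theorem random_perm_first_block_prob_upper {A : Type*} [Fintype A]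
    (k ℓ : ℕ) (hk : 1 ≤ k) (hl : k ≤ ℓ) (hkl : k ≤ k * ℓ)
    (x : Fin (k * ℓ) → A) (a : Fin k → A) :
    ((Finset.univ.filter (fun σ : Equiv.Perm (Fin (k * ℓ)) =>
        ∀ i : Fin k, x (σ (Fin.castLE hkl i)) = a i)).card : ℝ)
        / (Nat.factorial (k * ℓ))
      ≤ (∏ i, empPMF (k * ℓ) x (a i)) * (1 + (k : ℝ) / ℓ) := by
  classical
  set P : ℕ := ∏ i, (Finset.univ.filter (fun j : Fin (k * ℓ) => x j = a i)).card with hP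
  have hn0 : 0 < k * ℓ := by
    have : 1 ≤ ℓ := le_trans hk hl
    exact Nat.mul_pos hk this
  have hfactpos : (0:ℝ) < (Nat.factorial (k * ℓ) : ℝ) := by
    exact_mod_cast Nat.factorial_pos (k * ℓ)
  have hnkpos : (0:ℝ) < ((k * ℓ : ℕ):ℝ) ^ k := by
    have : (0:ℝ) < ((k * ℓ : ℕ):ℝ) := by exact_mod_cast hn0
    positivity
  have hD : ((Nat.descFactorial (k * ℓ) k : ℕ) : ℝ) = ∏ i ∈ Finset.range k, (((k * ℓ : ℕ):ℝ) - i) := by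
    rw [Nat.descFactorial_eq_prod_range, Nat.cast_prod]
    apply Finset.prod_congr rfl
    intro i hi
    have : i ≤ k * ℓ := le_trans (Finset.mem_range.1 hi).le hkl
    rw [Nat.cast_sub this]
  have hfacteq : ((Nat.factorial (k * ℓ) : ℕ) : ℝ)
      = (Nat.factorial (k * ℓ - k) : ℝ) * ∏ i ∈ Finset.range k, (((k * ℓ : ℕ):ℝ) - i) := by
    rw [← hD, ← Nat.cast_mul, Nat.factorial_mul_descFactorial hkl]
  have hkey := key_real k ℓ hk hl
  have hcard := card_block (k * ℓ) k hkl x a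
  have hprodPMF : ∏ i, empPMF (k * ℓ) x (a i) = (P:ℝ) / ((k * ℓ : ℕ):ℝ) ^ k := by
    unfold empPMF
    rw [Finset.prod_div_distrib, Finset.prod_const, Finset.card_univ, Fintype.card_fin,
      hP, Nat.cast_prod]
  rw [div_le_iff₀ hfactpos, hprodPMF]
  have hstep1 : ((Finset.univ.filter (fun σ : Equiv.Perm (Fin (k * ℓ)) =>
      ∀ i : Fin k, x (σ (Fin.castLE hkl i)) = a i)).card : ℝ)
      ≤ (P:ℝ) * (Nat.factorial (k * ℓ - k) : ℝ) := by
    exact_mod_cast hcard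
  have hone : (1:ℝ) ≤ (1 + (k:ℝ)/ℓ) * (∏ i ∈ Finset.range k, (((k * ℓ : ℕ):ℝ) - i)) / ((k * ℓ : ℕ):ℝ)^k :=
    (one_le_div hnkpos).2 hkey
  refine le_trans hstep1 ?_
  rw [hfacteq]
  exact final_arith _ _ _ _ _ (Nat.cast_nonneg _) (Nat.cast_nonneg _) hone
end

section
/- Let x_1^{kℓ} ∈ A^{kℓ} have type Q with Q(a_i) > β ≥ 1/(2ℓ) for all letters a_i of a_1^k, and let V_1^{kℓ} be a uniformly random permutation of x_1^{kℓ}. Then P(V_1^k = a_1^k) > Q^k(a_1^k)·(1 − k/(ℓβ)). -/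
open scoped Classical BigOperators


theorem prod_one_sub_ge' {ι : Type*} (s : Finset ι) (f : ι → ℝ)
    (h0 : ∀ i ∈ s, 0 ≤ f i) (h1 : ∀ i ∈ s, f i ≤ 1) :
    1 - ∑ i ∈ s, f i ≤ ∏ i ∈ s, (1 - f i) := by
  induction s using Finset.cons_induction with
  | empty => simp
  | cons a s ha ih =>
    rw [Finset.prod_cons, Finset.sum_cons]
    have h0' : ∀ i ∈ s, 0 ≤ f i := fun i hi => h0 i (Finset.mem_cons_of_mem hi)
    have h1' : ∀ i ∈ s, f i ≤ 1 := fun i hi => h1 i (Finset.mem_cons_of_mem hi)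
    have ha0 := h0 a (Finset.mem_cons_self a s)
    have ha1 := h1 a (Finset.mem_cons_self a s)
    have hs0 : 0 ≤ ∑ i ∈ s, f i := Finset.sum_nonneg h0'
    nlinarith [ih h0' h1', mul_nonneg ha0 hs0]

theorem exists_perm_extend {n k : ℕ} (hkn : k ≤ n) (f : Fin k ↪ Fin n) :
    ∃ σ : Equiv.Perm (Fin n), ∀ i, σ (Fin.castLE hkn i) = f i := by
  classical
  set p : Fin n → Prop := fun j => j ∈ Set.range (Fin.castLE hkn) with hp
  set q : Fin n → Prop := fun j => j ∈ Set.range f with hq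
  have hcastinj : Function.Injective (Fin.castLE hkn) := Fin.castLE_injective hkn
  let e1 : Fin k ≃ {j // p j} := Equiv.ofInjective _ hcastinj
  let e2 : Fin k ≃ {j // q j} := Equiv.ofInjective _ f.injective
  have hc1 : Fintype.card {j // p j} = k := by
    rw [← Fintype.card_congr e1, Fintype.card_fin]
  have hc2 : Fintype.card {j // q j} = k := by
    rw [← Fintype.card_congr e2, Fintype.card_fin]
  have hcompl : Fintype.card {j // ¬ p j} = Fintype.card {j // ¬ q j} := by
    rw [Fintype.card_subtype_compl, Fintype.card_subtype_compl, hc1, hc2]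
  let e3 : {j // ¬ p j} ≃ {j // ¬ q j} := Fintype.equivOfCardEq hcompl
  refine ⟨(Equiv.sumCompl p).symm.trans (((e1.symm.trans e2).sumCongr e3).trans
    (Equiv.sumCompl q)), fun i => ?_⟩
  have hpi : p (Fin.castLE hkn i) := ⟨i, rfl⟩
  simp only [Equiv.trans_apply]
  rw [Equiv.sumCompl_symm_apply_of_pos hpi]
  have he1 : e1.symm ⟨Fin.castLE hkn i, hpi⟩ = i := by
    rw [Equiv.symm_apply_eq]; rfl
  simp [Equiv.sumCongr_apply, he1, e2, Equiv.ofInjective_apply]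
  rfl

theorem snoc_injective {n k : ℕ} (g : Fin k → Fin n) (hg : Function.Injective g)
    (j : Fin n) (hj : ∀ i, g i ≠ j) : Function.Injective (Fin.snoc g j) := by
  intro p q hpq
  induction p using Fin.lastCases with
  | last =>
    induction q using Fin.lastCases with
    | last => rfl
    | cast i =>
      rw [Fin.snoc_last, Fin.snoc_castSucc] at hpq
      exact absurd hpq.symm (hj i)
  | cast i =>
    induction q using Fin.lastCases with
    | last =>
      rw [Fin.snoc_last, Fin.snoc_castSucc] at hpq
      exact absurd hpq (hj i)
    | cast i' =>
      rw [Fin.snoc_castSucc, Fin.snoc_castSucc] at hpq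
      exact congrArg Fin.castSucc (hg hpq)

theorem emb_count' {A : Type*} (n : ℕ) (x : Fin n → A) :
    ∀ (k : ℕ) (a : Fin k → A),
      (∀ i : Fin k, (i : ℕ) < (Finset.univ.filter (fun j : Fin n => x j = a i)).card) →
      ∏ i : Fin k, ((Finset.univ.filter (fun j : Fin n => x j = a i)).card - (i : ℕ))
        ≤ (Finset.univ.filter (fun f : Fin k → Fin n =>
            Function.Injective f ∧ ∀ i, x (f i) = a i)).card := by
  classical
  intro k
  induction k with
  | zero =>
    intro a _
    simp only [Finset.univ_eq_empty, Finset.prod_empty]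
    refine Finset.card_pos.mpr ⟨fun i : Fin 0 => i.elim0, ?_⟩
    simp only [Finset.mem_filter, Finset.mem_univ, true_and]
    exact ⟨fun i => i.elim0, fun i => i.elim0⟩
  | succ k ih =>
    intro a ha
    set a' : Fin k → A := fun i => a i.castSucc with ha'
    have ha'lt : ∀ i : Fin k, (i : ℕ) < (Finset.univ.filter (fun j : Fin n => x j = a' i)).card :=
      fun i => ha i.castSucc
    set Tm := Finset.univ.filter (fun f : Fin k → Fin n =>
      Function.Injective f ∧ ∀ i, x (f i) = a' i) with hTm
    set Tm1 := Finset.univ.filter (fun f : Fin (k+1) → Fin n =>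
      Function.Injective f ∧ ∀ i, x (f i) = a i) with hTm1
    set Φ : (Fin (k+1) → Fin n) → (Fin k → Fin n) := fun g => g ∘ Fin.castSucc with hΦ
    have hmaps : ∀ g ∈ Tm1, Φ g ∈ Tm := by
      intro g hg
      rw [hTm1, Finset.mem_filter] at hg
      rw [hTm, Finset.mem_filter]
      refine ⟨Finset.mem_univ _, hg.2.1.comp (Fin.castSucc_injective k), fun i => hg.2.2 i.castSucc⟩
    have hcardsum : Tm1.card = ∑ g ∈ Tm, (Tm1.filter (fun h => Φ h = g)).card :=
      Finset.card_eq_sum_card_fiberwise hmaps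
    have hfiber : ∀ g ∈ Tm,
        (Finset.univ.filter (fun j : Fin n => x j = a (Fin.last k))).card - k
          ≤ (Tm1.filter (fun h => Φ h = g)).card := by
      intro g hg
      rw [hTm, Finset.mem_filter] at hg
      set D := (Finset.univ.filter (fun j : Fin n => x j = a (Fin.last k))) \
        (Finset.univ.image g) with hD
      have hDcard : (Finset.univ.filter (fun j : Fin n => x j = a (Fin.last k))).card - k
          ≤ D.card := by
        refine le_trans ?_ (Finset.le_card_sdiff _ _)
        have h1 : (Finset.univ.image g).card ≤ k := le_trans Finset.card_image_le (by simp)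
        omega
      refine le_trans hDcard ?_
      refine Finset.card_le_card_of_injOn (fun j => Fin.snoc g j) ?_ ?_
      · intro j hj
        simp only [Finset.mem_coe, hD] at hj
        rw [Finset.mem_sdiff, Finset.mem_filter] at hj
        have hjne : ∀ i, g i ≠ j := by
          intro i hij
          exact hj.2 (Finset.mem_image.mpr ⟨i, Finset.mem_univ _, hij⟩)
        rw [Finset.mem_coe, Finset.mem_filter, hTm1, Finset.mem_filter]
        refine ⟨⟨Finset.mem_univ _, snoc_injective g hg.2.1 j hjne, fun i => ?_⟩, ?_⟩
        · induction i using Fin.lastCases with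
          | last => simpa only [Fin.snoc_last] using hj.1.2
          | cast i' => simpa only [Fin.snoc_castSucc] using hg.2.2 i'
        · funext i
          simp [hΦ, Fin.snoc_castSucc]
      · intro j₁ _ j₂ _ hj
        have := congrFun hj (Fin.last k)
        simpa [Fin.snoc_last] using this
    rw [hcardsum]
    calc ∏ i : Fin (k+1), ((Finset.univ.filter (fun j : Fin n => x j = a i)).card - (i : ℕ))
        = (∏ i : Fin k, ((Finset.univ.filter (fun j : Fin n => x j = a' i)).card - (i : ℕ)))
          * ((Finset.univ.filter (fun j : Fin n => x j = a (Fin.last k))).card - k) := by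
          rw [Fin.prod_univ_castSucc]
          simp [ha']
      _ ≤ Tm.card * ((Finset.univ.filter (fun j : Fin n => x j = a (Fin.last k))).card - k) :=
          Nat.mul_le_mul_right _ (ih a' ha'lt)
      _ ≤ ∑ g ∈ Tm, (Tm1.filter (fun h => Φ h = g)).card := by
          have hs := Finset.sum_le_sum hfiber
          rwa [Finset.sum_const, smul_eq_mul] at hs

theorem perm_count' {A : Type*} (n k : ℕ) (hkn : k ≤ n) (x : Fin n → A) (a : Fin k → A) :
    (Finset.univ.filter (fun f : Fin k → Fin n =>
       Function.Injective f ∧ ∀ i, x (f i) = a i)).card * (n - k).factorial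
      ≤ (Finset.univ.filter (fun σ : Equiv.Perm (Fin n) =>
          ∀ i, x (σ (Fin.castLE hkn i)) = a i)).card := by
  classical
  set Tk := Finset.univ.filter (fun f : Fin k → Fin n =>
    Function.Injective f ∧ ∀ i, x (f i) = a i) with hTk
  set P := Finset.univ.filter (fun σ : Equiv.Perm (Fin n) =>
    ∀ i, x (σ (Fin.castLE hkn i)) = a i) with hP
  set Φ : Equiv.Perm (Fin n) → (Fin k → Fin n) := fun σ i => σ (Fin.castLE hkn i) with hΦ
  -- the predicate for the first k positions
  set p : Fin n → Prop := fun j => j ∈ Set.range (Fin.castLE hkn) with hp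
  have hcp : Fintype.card {j // p j} = k := by
    rw [← Fintype.card_congr (Equiv.ofInjective _ (Fin.castLE_injective hkn)), Fintype.card_fin]
  have hcompl : Fintype.card (Fin (n - k)) = Fintype.card {j // ¬ p j} := by
    rw [Fintype.card_fin, Fintype.card_subtype_compl, hcp, Fintype.card_fin]
  let u : Fin (n - k) ≃ {j // ¬ p j} := Fintype.equivOfCardEq hcompl
  have hmaps : ∀ σ ∈ P, Φ σ ∈ Tk := by
    intro σ hσ
    rw [hP, Finset.mem_filter] at hσ
    rw [hTk, Finset.mem_filter]
    exact ⟨Finset.mem_univ _, σ.injective.comp (Fin.castLE_injective hkn), hσ.2⟩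
  rw [Finset.card_eq_sum_card_fiberwise hmaps]
  have hfiber : ∀ g ∈ Tk, (n - k).factorial ≤ (P.filter (fun σ => Φ σ = g)).card := by
    intro g hg
    rw [hTk, Finset.mem_filter] at hg
    obtain ⟨σg, hσg⟩ := exists_perm_extend hkn ⟨g, hg.2.1⟩
    set Ψ : Equiv.Perm (Fin (n - k)) → Equiv.Perm (Fin n) :=
      fun τ => (Equiv.Perm.subtypeCongr (Equiv.refl {j // p j}) (u.permCongr τ)).trans σg
      with hΨ
    have hext : ∀ (τ : Equiv.Perm (Fin (n - k))) (i : Fin k),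
        (Equiv.Perm.subtypeCongr (Equiv.refl {j // p j}) (u.permCongr τ))
          (Fin.castLE hkn i) = Fin.castLE hkn i := by
      intro τ i
      have hpi : p (Fin.castLE hkn i) := ⟨i, rfl⟩
      rw [Equiv.Perm.subtypeCongr.left_apply _ _ hpi]
      rfl
    have hval : ∀ (τ : Equiv.Perm (Fin (n - k))) (i : Fin k), (Ψ τ) (Fin.castLE hkn i) = g i := by
      intro τ i
      rw [hΨ]
      simp only [Equiv.trans_apply]
      rw [hext τ i, hσg i]
      rfl
    have hcard : (Finset.univ : Finset (Equiv.Perm (Fin (n - k)))).card ≤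
        (P.filter (fun σ => Φ σ = g)).card := by
      refine Finset.card_le_card_of_injOn Ψ ?_ ?_
      · intro τ _
        rw [Finset.mem_coe, Finset.mem_filter, hP, Finset.mem_filter]
        refine ⟨⟨Finset.mem_univ _, fun i => ?_⟩, funext fun i => hval τ i⟩
        rw [show (Ψ τ) (Fin.castLE hkn i) = g i from hval τ i]
        exact hg.2.2 i
      · intro τ₁ _ τ₂ _ hτ
        have hee : (Equiv.Perm.subtypeCongr (Equiv.refl {j // p j}) (u.permCongr τ₁))
            = (Equiv.Perm.subtypeCongr (Equiv.refl {j // p j}) (u.permCongr τ₂)) := by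
          have := congrArg (fun σ => σ.trans σg.symm) hτ
          simpa [hΨ, Equiv.trans_assoc] using this
        have : u.permCongr τ₁ = u.permCongr τ₂ := by
          refine Equiv.ext fun s => ?_
          have h1 : (Equiv.Perm.subtypeCongr (Equiv.refl {j // p j}) (u.permCongr τ₁)) s.1
              = (Equiv.Perm.subtypeCongr (Equiv.refl {j // p j}) (u.permCongr τ₂)) s.1 := by
            rw [hee]
          rw [Equiv.Perm.subtypeCongr.right_apply _ _ s.2, Equiv.Perm.subtypeCongr.right_apply _ _ s.2] at h1
          exact Subtype.ext (by simpa using h1)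
        exact u.permCongr.injective this
    calc (n - k).factorial = (Finset.univ : Finset (Equiv.Perm (Fin (n - k)))).card := by
          simp [Fintype.card_perm]
      _ ≤ _ := hcard
  calc Tk.card * (n - k).factorial ≤ ∑ _g ∈ Tk, (n - k).factorial := by
        rw [Finset.sum_const, smul_eq_mul]
    _ ≤ ∑ g ∈ Tk, (P.filter (fun σ => Φ σ = g)).card := Finset.sum_le_sum hfiber

set_option maxHeartbeats 1000000 in
/-- if `x_1^{kℓ}` has type `Q` with `Q(a_i) > β ≥ 1/(2ℓ)` for all
letters `a_i` of `a_1^k`, and `V_1^{kℓ}` is a uniformly random permutation of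
`x_1^{kℓ}`, then `P(V_1^k = a_1^k) > Q^k(a_1^k)·(1 − k/(ℓβ))`. -/
theorem random_perm_first_block_prob_lower {A : Type*} [Fintype A]
    (k ℓ : ℕ) (hk : 1 ≤ k) (hl : 1 ≤ ℓ) (hkl : k ≤ k * ℓ)
    (x : Fin (k * ℓ) → A) (a : Fin k → A)
    (β : ℝ) (hβ : (1 : ℝ) / (2 * ℓ) ≤ β)
    (hQβ : ∀ i : Fin k, β < empPMF (k * ℓ) x (a i)) :
    (∏ i, empPMF (k * ℓ) x (a i)) * (1 - (k : ℝ) / (ℓ * β))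
      < ((Finset.univ.filter (fun σ : Equiv.Perm (Fin (k * ℓ)) =>
          ∀ i : Fin k, x (σ (Fin.castLE hkl i)) = a i)).card : ℝ)
          / (Nat.factorial (k * ℓ)) := by
  classical
  set cnt : Fin k → ℕ := fun i => (Finset.univ.filter (fun j : Fin (k * ℓ) => x j = a i)).card with hcnt
  have hnpos : 0 < k * ℓ := Nat.mul_pos hk hl
  have hnR : (0 : ℝ) < (k * ℓ) := by exact_mod_cast hnpos
  have hlR : (1 : ℝ) ≤ ℓ := by exact_mod_cast hl
  have hkR : (1 : ℝ) ≤ k := by exact_mod_cast hk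
  have hβ0 : (0 : ℝ) < β := lt_of_lt_of_le (div_pos one_pos (by linarith)) hβ
  have hlβ : (0 : ℝ) < (ℓ : ℝ) * β := mul_pos (by linarith) hβ0
  have hQ : ∀ i, empPMF (k * ℓ) x (a i) = (cnt i : ℝ) / ((k:ℝ) * ℓ) := by
    intro i
    rw [empPMF, hcnt]
    push_cast
    rfl
  have hQpos : ∀ i : Fin k, 0 < empPMF (k * ℓ) x (a i) := fun i => lt_trans hβ0 (hQβ i)
  have hprodQ : 0 < ∏ i, empPMF (k * ℓ) x (a i) :=
    Finset.prod_pos (fun i _ => hQpos i)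
  have hRHS0 : (0:ℝ) ≤ ((Finset.univ.filter (fun σ : Equiv.Perm (Fin (k * ℓ)) =>
      ∀ i : Fin k, x (σ (Fin.castLE hkl i)) = a i)).card : ℝ) / (Nat.factorial (k * ℓ)) := by
    positivity
  rcases lt_or_ge ((ℓ : ℝ) * β) k with hcase | hcase
  · -- the factor 1 - k/(ℓβ) is negative
    have hneg : 1 - (k : ℝ) / (ℓ * β) < 0 := by
      have : (1:ℝ) < (k : ℝ) / ((ℓ:ℝ) * β) := (one_lt_div hlβ).mpr hcase
      linarith
    exact lt_of_lt_of_le (mul_neg_of_pos_of_neg hprodQ hneg) hRHS0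
  · -- main case : k ≤ ℓβ
    have hnβ : (k:ℝ) * k ≤ ((k * ℓ):ℝ) * β := by
      rw [mul_assoc]
      exact mul_le_mul_of_nonneg_left hcase (by linarith)
    have hcntR : ∀ i : Fin k, ((k * ℓ):ℝ) * β < (cnt i : ℝ) := by
      intro i
      have := hQβ i
      rw [hQ i, lt_div_iff₀ hnR] at this
      linarith
    have hcntk : ∀ i : Fin k, (k:ℝ) * k < (cnt i : ℝ) := fun i => lt_of_le_of_lt hnβ (hcntR i)
    have hik : ∀ i : Fin k, ((i:ℕ):ℝ) < (k:ℝ) := by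
      intro i; exact_mod_cast i.isLt
    have hicnt : ∀ i : Fin k, ((i:ℕ):ℝ) < (cnt i : ℝ) := by
      intro i
      calc ((i:ℕ):ℝ) < (k:ℝ) := hik i
        _ ≤ (k:ℝ)*k := by nlinarith
        _ < _ := hcntk i
    have hicntN : ∀ i : Fin k, (i:ℕ) < cnt i := fun i => by exact_mod_cast hicnt i
    -- the natural-number counting bound
    have hkey : (∏ i : Fin k, (cnt i - (i:ℕ))) * ((k * ℓ) - k).factorial
        ≤ (Finset.univ.filter (fun σ : Equiv.Perm (Fin (k * ℓ)) =>
            ∀ i : Fin k, x (σ (Fin.castLE hkl i)) = a i)).card :=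
      le_trans (Nat.mul_le_mul_right _ (emb_count' (k * ℓ) x k a hicntN)) (perm_count' (k * ℓ) k hkl x a)
    -- move to the reals
    have hfac : (((k * ℓ).factorial : ℕ) : ℝ) = (((k * ℓ) - k).factorial : ℝ) * ((k * ℓ).descFactorial k : ℝ) := by
      rw [← Nat.cast_mul, Nat.factorial_mul_descFactorial hkl]
    have hstep1 : ((∏ i : Fin k, (cnt i - (i:ℕ)) : ℕ) : ℝ) * (((k * ℓ) - k).factorial : ℝ)
          / ((k * ℓ).factorial : ℝ)
        ≤ ((Finset.univ.filter (fun σ : Equiv.Perm (Fin (k * ℓ)) =>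
            ∀ i : Fin k, x (σ (Fin.castLE hkl i)) = a i)).card : ℝ) / ((k * ℓ).factorial : ℝ) := by
      gcongr
      exact_mod_cast hkey
    have hdesc0 : (0:ℝ) < ((k * ℓ).descFactorial k : ℝ) := by
      have h0 : 0 < (k * ℓ).descFactorial k :=
        Nat.pos_of_ne_zero (fun h => absurd (Nat.descFactorial_eq_zero_iff_lt.mp h) (not_lt.mpr hkl))
      exact_mod_cast h0
    have hfac0 : (0:ℝ) < (((k * ℓ)-k).factorial : ℝ) := by exact_mod_cast Nat.factorial_pos _
    have hstep2 : ((∏ i : Fin k, (cnt i - (i:ℕ)) : ℕ) : ℝ) * (((k * ℓ) - k).factorial : ℝ)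
          / ((k * ℓ).factorial : ℝ)
        = ((∏ i : Fin k, (cnt i - (i:ℕ)) : ℕ) : ℝ) / ((k * ℓ).descFactorial k : ℝ) := by
      rw [hfac]
      rw [mul_comm (((k * ℓ) - k).factorial : ℝ) ((k * ℓ).descFactorial k : ℝ)]
      rw [mul_div_mul_right _ _ (ne_of_gt hfac0)]
    -- rewrite as a product of ratios
    have hprodcast : ((∏ i : Fin k, (cnt i - (i:ℕ)) : ℕ) : ℝ)
        = ∏ i : Fin k, ((cnt i : ℝ) - (i:ℕ)) := by
      rw [Nat.cast_prod]
      exact Finset.prod_congr rfl fun i _ => by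
        rw [Nat.cast_sub (le_of_lt (hicntN i))]
    have hdesccast : (((k * ℓ).descFactorial k : ℕ) : ℝ) = ∏ i : Fin k, (((k * ℓ) : ℝ) - (i:ℕ)) := by
      rw [Nat.descFactorial_eq_prod_range, Nat.cast_prod,
        ← Fin.prod_univ_eq_prod_range (fun i => (((k * ℓ) - i : ℕ) : ℝ)) k]
      exact Finset.prod_congr rfl fun i _ => by
        rw [Nat.cast_sub (le_of_lt (lt_of_lt_of_le i.isLt hkl))]
        push_cast
        ring
    have hratio : ((∏ i : Fin k, (cnt i - (i:ℕ)) : ℕ) : ℝ) / ((k * ℓ).descFactorial k : ℝ)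
        = ∏ i : Fin k, (((cnt i : ℝ) - (i:ℕ)) / (((k * ℓ) : ℝ) - (i:ℕ))) := by
      rw [hprodcast, hdesccast, ← Finset.prod_div_distrib]
    -- termwise lower bound
    set L : Fin k → ℝ := fun i => empPMF (k * ℓ) x (a i) * (1 - ((i:ℕ):ℝ) / (((k * ℓ):ℝ) * β)) with hL
    have hnβ0 : (0:ℝ) < ((k * ℓ):ℝ) * β := mul_pos hnR hβ0
    have hfle1 : ∀ i : Fin k, ((i:ℕ):ℝ) / (((k * ℓ):ℝ) * β) ≤ 1 := by
      intro i
      rw [div_le_one hnβ0]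
      refine le_of_lt ?_
      calc ((i:ℕ):ℝ) < (k:ℝ) := hik i
        _ ≤ (k:ℝ)*k := by nlinarith
        _ ≤ _ := hnβ
    have hf0 : ∀ i : Fin k, 0 ≤ ((i:ℕ):ℝ) / (((k * ℓ):ℝ) * β) := by
      intro i; positivity
    have hL0 : ∀ i : Fin k, 0 ≤ L i := by
      intro i
      exact mul_nonneg (le_of_lt (hQpos i)) (by linarith [hfle1 i])
    have hterm : ∀ i : Fin k, L i ≤ ((cnt i : ℝ) - (i:ℕ)) / (((k * ℓ) : ℝ) - (i:ℕ)) := by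
      intro i
      have hiltn : ((i:ℕ):ℝ) < ((k * ℓ):ℝ) := lt_of_lt_of_le (hik i) (by exact_mod_cast hkl)
      have h1 : L i ≤ ((cnt i : ℝ) - (i:ℕ)) / ((k * ℓ):ℝ) := by
        simp only [hL]
        rw [hQ i, div_mul_eq_mul_div]
        have hid : (((k:ℝ) * ℓ) * β) * (((i:ℕ):ℝ) / (((k:ℝ) * ℓ) * β)) = ((i:ℕ):ℝ) := by
          field_simp
        have h2 : ((i:ℕ):ℝ) ≤ (cnt i : ℝ) * (((i:ℕ):ℝ) / (((k:ℝ) * ℓ) * β)) := by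
          calc ((i:ℕ):ℝ) = (((k:ℝ) * ℓ) * β) * (((i:ℕ):ℝ) / (((k:ℝ) * ℓ) * β)) := hid.symm
            _ ≤ _ := mul_le_mul_of_nonneg_right (le_of_lt (hcntR i)) (hf0 i)
        have hnum : (cnt i : ℝ) * (1 - ((i:ℕ):ℝ) / (((k:ℝ) * ℓ) * β)) ≤ (cnt i : ℝ) - (i:ℕ) := by
          nlinarith [h2]
        gcongr
      refine le_trans h1 ?_
      have hnum0 : (0:ℝ) ≤ (cnt i : ℝ) - (i:ℕ) := by linarith [hicnt i]
      exact div_le_div_of_nonneg_left hnum0 (by linarith) (by linarith)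
    -- sum bound
    have hsumN : ∑ i : Fin k, ((i:ℕ):ℝ) ≤ (k:ℝ) * ((k:ℝ) - 1) := by
      have h5 : ∑ i : Fin k, ((i:ℕ):ℝ) = ∑ i ∈ Finset.range k, (i:ℝ) :=
        Fin.sum_univ_eq_sum_range _ k
      have h7 := Finset.sum_range_id_mul_two k
      have h8 : (∑ i ∈ Finset.range k, (i:ℝ)) * 2 = (k:ℝ) * ((k:ℝ) - 1) := by
        have h9 := congrArg (fun m : ℕ => (m:ℝ)) h7
        push_cast [Nat.cast_sub hk] at h9
        linarith [h9]
      rw [h5]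
      nlinarith [h8]
    have hSlt : ∑ i : Fin k, ((i:ℕ):ℝ) / (((k * ℓ):ℝ) * β) < (k:ℝ) / ((ℓ:ℝ) * β) := by
      rw [← Finset.sum_div]
      have heq : (k:ℝ) / ((ℓ:ℝ) * β) = (k:ℝ) * (k:ℝ) / (((k * ℓ):ℝ) * β) := by
        rw [eq_div_iff (ne_of_gt hnβ0)]
        field_simp
      rw [heq]
      apply div_lt_div_of_pos_right ?_ hnβ0
      calc ∑ i : Fin k, ((i:ℕ):ℝ) ≤ (k:ℝ) * ((k:ℝ) - 1) := hsumN
        _ < (k:ℝ) * (k:ℝ) := by nlinarith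
    have hub : 1 - (k:ℝ) / ((ℓ:ℝ) * β) < 1 - ∑ i : Fin k, ((i:ℕ):ℝ) / (((k * ℓ):ℝ) * β) := by
      linarith
    calc (∏ i, empPMF (k * ℓ) x (a i)) * (1 - (k : ℝ) / (ℓ * β))
        < (∏ i, empPMF (k * ℓ) x (a i)) *
            (1 - ∑ i : Fin k, ((i:ℕ):ℝ) / (((k * ℓ):ℝ) * β)) :=
          mul_lt_mul_of_pos_left hub hprodQ
      _ ≤ (∏ i, empPMF (k * ℓ) x (a i)) *
            ∏ i : Fin k, (1 - ((i:ℕ):ℝ) / (((k * ℓ):ℝ) * β)) :=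
          mul_le_mul_of_nonneg_left
            (prod_one_sub_ge' Finset.univ _ (fun i _ => hf0 i) (fun i _ => hfle1 i))
            (le_of_lt hprodQ)
      _ = ∏ i : Fin k, L i := by
          simp only [hL]
          rw [Finset.prod_mul_distrib]
      _ ≤ ∏ i : Fin k, (((cnt i : ℝ) - (i:ℕ)) / (((k * ℓ) : ℝ) - (i:ℕ))) :=
          Finset.prod_le_prod (fun i _ => hL0 i) (fun i _ => hterm i)
      _ = ((∏ i : Fin k, (cnt i - (i:ℕ)) : ℕ) : ℝ) / ((k * ℓ).descFactorial k : ℝ) := hratio.symm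
      _ = ((∏ i : Fin k, (cnt i - (i:ℕ)) : ℕ) : ℝ) * (((k * ℓ) - k).factorial : ℝ)
            / ((k * ℓ).factorial : ℝ) := hstep2.symm
      _ ≤ _ := hstep1
end

section
/- Pythagorean inequality for relative entropy: if E is a closed convex set of PMFs on a finite set, Q a PMF with D* = min_{W∈E} D(W‖Q) attained at W*, then for every P ∈ E, D(P‖Q) ≥ D(P‖W*) + D(W*‖Q). -/
open scoped Classical BigOperators

private lemma aux_lin (K L : ℝ) (h : ∀ t : ℝ, 0 < t → t ≤ 1 → 0 ≤ t * K + L) : 0 ≤ L := by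
  by_contra h'
  push_neg at h'
  have hK1 : (0:ℝ) < |K| + 1 := by positivity
  set t := min 1 ((-L)/(|K|+1)) with ht
  have ht0 : 0 < t := lt_min one_pos (div_pos (by linarith) hK1)
  have ht1 : t ≤ 1 := min_le_left _ _
  have h2 : t * (|K|+1) ≤ -L := by
    have h5 : t ≤ (-L)/(|K|+1) := min_le_right _ _
    calc t * (|K|+1) ≤ ((-L)/(|K|+1)) * (|K|+1) := by nlinarith
    _ = -L := by field_simp
  have h3 : t * K ≤ t * |K| := mul_le_mul_of_nonneg_left (le_abs_self K) ht0.le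
  have := h t ht0 ht1
  nlinarith

private lemma point_key (t wv p W q : ℝ) (h0t : 0 ≤ t) (ht1 : t ≤ 1) (hp : 0 ≤ p)
    (hW : 0 < W) (hq : 0 < q) (hwv : wv = (1-t)*W + t*p) :
    wv * Real.log (wv / q) - W * Real.log (W / q)
      ≤ t * (p - W) * (wv / W) + t * (p - W) * Real.log (W / q) := by
  have hwnn : 0 ≤ wv := by nlinarith
  have hdiff : wv - W = t * (p - W) := by rw [hwv]; ring
  rcases hwnn.eq_or_lt with h|h
  · have h0 : wv = 0 := h.symm
    subst h0
    have heq : t * (p - W) = -W := by linarith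
    rw [heq]
    simp only [zero_div, zero_mul, Real.log_zero, mul_zero, zero_sub]
    apply le_of_eq
    ring
  · have h1 : Real.log (wv / W) ≤ wv / W - 1 := Real.log_le_sub_one_of_pos (div_pos h hW)
    have hdec : Real.log (wv / q) = Real.log (wv / W) + Real.log (W / q) := by
      rw [Real.log_div h.ne' hq.ne', Real.log_div h.ne' hW.ne', Real.log_div hW.ne' hq.ne']; ring
    have h2 : wv * Real.log (wv / W) ≤ wv * (wv/W - 1) := mul_le_mul_of_nonneg_left h1 h.le
    have h3 : wv * (wv/W - 1) = (wv - W) * (wv / W) := by field_simp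
    have h4 : (wv - W) * Real.log (W/q) = t*(p-W) * Real.log (W/q) := by rw [hdiff]
    have h5 : (wv - W) * (wv / W) = t * (p - W) * (wv / W) := by rw [hdiff]
    nlinarith [h2]

/-- Pythagorean inequality for relative entropy. If `E` is a closed
convex set of PMFs on a finite set, `Q` a PMF, and `W*` the I-projection of `Q`
onto `E` (i.e. the minimizer of `D(·‖Q)` over `E`), then for every `P ∈ E`,
`D(P‖Q) ≥ D(P‖W*) + D(W*‖Q)`. -/
theorem pythagorean_inequality_relEnt {A : Type*} [Fintype A]
    (E : Set (A → ℝ)) (hEpmf : ∀ P ∈ E, (∀ a, 0 ≤ P a) ∧ (∑ a, P a) = 1)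
    (hEclosed : IsClosed E) (hEconvex : Convex ℝ E)
    (Q : A → ℝ) (hQ0 : ∀ a, 0 ≤ Q a) (hQ1 : (∑ a, Q a) = 1)
    (Wstar : A → ℝ) (hWE : Wstar ∈ E)
    (hWmin : ∀ P ∈ E, relEntE Wstar Q ≤ relEntE P Q) :
    ∀ P ∈ E, relEntE P Wstar + relEntE Wstar Q ≤ relEntE P Q := by
  intro P hPE
  by_cases hPQ : ∀ a, Q a = 0 → P a = 0
  swap
  · have h1 : relEntE P Q = ⊤ := by unfold relEntE; rw [if_neg hPQ]
    rw [h1]; exact le_top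
  by_cases hWQ : ∀ a, Q a = 0 → Wstar a = 0
  swap
  · have h1 : relEntE Wstar Q = ⊤ := by unfold relEntE; rw [if_neg hWQ]
    have h2 := hWmin P hPE
    rw [h1, top_le_iff] at h2
    rw [h2]; exact le_top
  obtain ⟨hP0, hP1⟩ := hEpmf P hPE
  obtain ⟨hW0, hW1⟩ := hEpmf Wstar hWE
  set w : ℝ → A → ℝ := fun t a => (1-t) * Wstar a + t * P a with hw
  have hwE : ∀ t : ℝ, 0 ≤ t → t ≤ 1 → w t ∈ E := by
    intro t h0 h1
    have h := hEconvex hWE hPE (by linarith : (0:ℝ) ≤ 1 - t) h0 (by ring)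
    have he : w t = (1-t) • Wstar + t • P := by
      funext a
      simp [hw, Pi.add_apply, smul_eq_mul]
    rw [he]; exact h
  have hwQ : ∀ t : ℝ, ∀ a, Q a = 0 → w t a = 0 := by
    intro t a h
    simp [hw, hPQ a h, hWQ a h]
  have hmin : ∀ t : ℝ, 0 ≤ t → t ≤ 1 →
      ∑ a, Wstar a * Real.log (Wstar a / Q a) ≤ ∑ a, w t a * Real.log (w t a / Q a) := by
    intro t h0 h1
    have h := hWmin (w t) (hwE t h0 h1)
    unfold relEntE at h
    rw [if_pos hWQ, if_pos (hwQ t)] at h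
    exact_mod_cast h
  -- Step A: absolute continuity of P w.r.t. Wstar
  have hAC : ∀ a, Wstar a = 0 → P a = 0 := by
    by_contra hc
    push_neg at hc
    obtain ⟨a0, hWa0, hPa0⟩ := hc
    set S : Finset A := Finset.univ.filter (fun a => Wstar a = 0 ∧ P a ≠ 0) with hSdef
    have ha0S : a0 ∈ S := by simp [hSdef, hWa0, hPa0]
    set s : ℝ := ∑ a ∈ S, P a with hsdef
    have hspos : 0 < s := Finset.sum_pos' (fun a _ => hP0 a)
      ⟨a0, ha0S, lt_of_le_of_ne (hP0 a0) (Ne.symm hPa0)⟩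
    set c : A → ℝ := fun a => |P a - Wstar a| * ((P a + Wstar a) / Wstar a)
      + (P a - Wstar a) * Real.log (Wstar a / Q a) with hcdef
    set C : ℝ := (∑ a ∈ Sᶜ, c a) + ∑ a ∈ S, P a * Real.log (P a / Q a) with hCdef
    have key : ∀ t : ℝ, 0 < t → t ≤ 1 →
        (∑ a, w t a * Real.log (w t a / Q a)) - (∑ a, Wstar a * Real.log (Wstar a / Q a))
          ≤ t * (C + s * Real.log t) := by
      intro t h0t ht1
      have hSe : ∀ a ∈ S, w t a * Real.log (w t a / Q a) - Wstar a * Real.log (Wstar a / Q a)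
          = t * (P a * Real.log (P a / Q a) + P a * Real.log t) := by
        intro a ha
        simp only [hSdef, Finset.mem_filter, Finset.mem_univ, true_and] at ha
        obtain ⟨hWa, hPa⟩ := ha
        have hPa' : 0 < P a := lt_of_le_of_ne (hP0 a) (Ne.symm hPa)
        have hQa : 0 < Q a := by
          rcases (hQ0 a).lt_or_eq with h|h
          · exact h
          · exact absurd (hPQ a h.symm) hPa
        have hwa : w t a = t * P a := by simp [hw, hWa]
        rw [hwa, hWa]
        have h6 : t * P a / Q a = t * (P a / Q a) := by ring
        rw [h6, Real.log_mul h0t.ne' (div_ne_zero hPa'.ne' hQa.ne')]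
        ring_nf
      have hSc : ∀ a ∈ Sᶜ, w t a * Real.log (w t a / Q a) - Wstar a * Real.log (Wstar a / Q a)
          ≤ t * c a := by
        intro a ha
        simp only [hSdef, Finset.mem_compl, Finset.mem_filter, Finset.mem_univ, true_and,
          not_and, not_not] at ha
        by_cases hWa : Wstar a = 0
        · have hPa : P a = 0 := ha hWa
          have hwa : w t a = 0 := by simp [hw, hWa, hPa]
          rw [hwa, hWa, hcdef]
          simp [hPa, hWa]
        · have hWa' : 0 < Wstar a := lt_of_le_of_ne (hW0 a) (Ne.symm hWa)
          have hQa : 0 < Q a := by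
            rcases (hQ0 a).lt_or_eq with h|h
            · exact h
            · exact absurd (hWQ a h.symm) hWa
          have hk := point_key t (w t a) (P a) (Wstar a) (Q a) h0t.le ht1 (hP0 a) hWa' hQa
            (by simp [hw])
          have hwnn : 0 ≤ w t a := by
            simp only [hw]
            nlinarith [mul_nonneg h0t.le (hP0 a),
              mul_nonneg (by linarith : (0:ℝ) ≤ 1-t) (hW0 a)]
          have hwle : w t a ≤ P a + Wstar a := by
            simp only [hw]
            nlinarith [mul_nonneg h0t.le (hW0 a),
              mul_nonneg (by linarith : (0:ℝ) ≤ 1-t) (hP0 a)]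
          have hinner : (P a - Wstar a) * (w t a / Wstar a)
              ≤ |P a - Wstar a| * ((P a + Wstar a) / Wstar a) := by
            have i1 : (P a - Wstar a) * (w t a / Wstar a)
                ≤ |P a - Wstar a| * (w t a / Wstar a) :=
              mul_le_mul_of_nonneg_right (le_abs_self _) (div_nonneg hwnn hWa'.le)
            have i2 : |P a - Wstar a| * (w t a / Wstar a)
                ≤ |P a - Wstar a| * ((P a + Wstar a) / Wstar a) :=
              mul_le_mul_of_nonneg_left ((div_le_div_iff_of_pos_right hWa').mpr hwle) (abs_nonneg _)
            linarith
          have hi := mul_le_mul_of_nonneg_left hinner h0t.le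
          have hce : t * c a = t * (|P a - Wstar a| * ((P a + Wstar a) / Wstar a))
              + t * ((P a - Wstar a) * Real.log (Wstar a / Q a)) := by
            rw [hcdef]; ring
          rw [hce]
          nlinarith [hk]
      have e1 : ∑ a ∈ S, t * (P a * Real.log (P a / Q a) + P a * Real.log t)
          = t * ((∑ a ∈ S, P a * Real.log (P a / Q a)) + s * Real.log t) := by
        rw [hsdef, Finset.sum_mul, mul_add, Finset.mul_sum, Finset.mul_sum,
          ← Finset.sum_add_distrib]
        exact Finset.sum_congr rfl (fun a _ => by ring)
      have e2 : ∑ a ∈ Sᶜ, t * c a = t * ∑ a ∈ Sᶜ, c a := by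
        rw [Finset.mul_sum]
      calc (∑ a, w t a * Real.log (w t a / Q a)) - (∑ a, Wstar a * Real.log (Wstar a / Q a))
          = ∑ a, (w t a * Real.log (w t a / Q a) - Wstar a * Real.log (Wstar a / Q a)) := by
            rw [Finset.sum_sub_distrib]
        _ = (∑ a ∈ S, (w t a * Real.log (w t a / Q a) - Wstar a * Real.log (Wstar a / Q a)))
            + ∑ a ∈ Sᶜ, (w t a * Real.log (w t a / Q a) - Wstar a * Real.log (Wstar a / Q a)) :=
            (Finset.sum_add_sum_compl S _).symm
        _ ≤ (∑ a ∈ S, t * (P a * Real.log (P a / Q a) + P a * Real.log t))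
            + ∑ a ∈ Sᶜ, t * c a := by
            apply add_le_add
            · exact le_of_eq (Finset.sum_congr rfl hSe)
            · exact Finset.sum_le_sum hSc
        _ = t * (C + s * Real.log t) := by
            rw [e1, e2, hCdef]; ring
    set t0 : ℝ := Real.exp (-(|C|+1)/s) with ht0def
    have ht00 : 0 < t0 := Real.exp_pos _
    have ht01 : t0 ≤ 1 := by
      rw [ht0def, Real.exp_le_one_iff]
      apply div_nonpos_of_nonpos_of_nonneg _ hspos.le
      have := abs_nonneg C; linarith
    have h1 := hmin t0 ht00.le ht01
    have h2 := key t0 ht00 ht01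
    have hlog : s * Real.log t0 = -(|C|+1) := by
      rw [ht0def, Real.log_exp]
      field_simp
    have h3 : C + s * Real.log t0 ≤ -1 := by
      have := le_abs_self C; linarith
    have h4 : t0 * (C + s * Real.log t0) ≤ -t0 := by
      have := mul_le_mul_of_nonneg_left h3 ht00.le
      linarith
    linarith [h2.trans h4]
  -- Step B: the Pythagorean inequality
  have hDPW : relEntE P Wstar = ((∑ a, P a * Real.log (P a / Wstar a) : ℝ) : EReal) := by
    unfold relEntE; rw [if_pos hAC]
  have hDWQ : relEntE Wstar Q = ((∑ a, Wstar a * Real.log (Wstar a / Q a) : ℝ) : EReal) := by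
    unfold relEntE; rw [if_pos hWQ]
  have hDPQ : relEntE P Q = ((∑ a, P a * Real.log (P a / Q a) : ℝ) : EReal) := by
    unfold relEntE; rw [if_pos hPQ]
  rw [hDPW, hDWQ, hDPQ, ← EReal.coe_add, EReal.coe_le_coe_iff]
  set K : ℝ := ∑ a, (P a - Wstar a) * (P a / Wstar a) with hK
  set L : ℝ := ∑ a, (P a - Wstar a) * Real.log (Wstar a / Q a) with hL
  have hident : (∑ a, P a * Real.log (P a / Q a)) - (∑ a, P a * Real.log (P a / Wstar a))
      - (∑ a, Wstar a * Real.log (Wstar a / Q a)) = L := by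
    rw [hL, ← Finset.sum_sub_distrib, ← Finset.sum_sub_distrib]
    apply Finset.sum_congr rfl
    intro a _
    by_cases hWa : Wstar a = 0
    · simp [hWa, hAC a hWa]
    · have hWa' : 0 < Wstar a := lt_of_le_of_ne (hW0 a) (Ne.symm hWa)
      have hQa : 0 < Q a := by
        rcases (hQ0 a).lt_or_eq with h|h
        · exact h
        · exact absurd (hWQ a h.symm) hWa
      by_cases hPa : P a = 0
      · rw [hPa]; ring
      · have hPa' : 0 < P a := lt_of_le_of_ne (hP0 a) (Ne.symm hPa)
        rw [Real.log_div hPa'.ne' hQa.ne', Real.log_div hPa'.ne' hWa'.ne',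
          Real.log_div hWa'.ne' hQa.ne']
        ring
  have hKL : ∀ t : ℝ, 0 < t → t ≤ 1 → 0 ≤ t * K + L := by
    intro t h0t ht1
    have h1 := hmin t h0t.le ht1
    have hpt : ∀ a ∈ (Finset.univ : Finset A),
        w t a * Real.log (w t a / Q a) - Wstar a * Real.log (Wstar a / Q a)
          ≤ t * ((P a - Wstar a) * (w t a / Wstar a))
            + t * ((P a - Wstar a) * Real.log (Wstar a / Q a)) := by
      intro a _
      by_cases hWa : Wstar a = 0
      · have hPa := hAC a hWa
        have hwa : w t a = 0 := by simp [hw, hWa, hPa]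
        rw [hwa, hWa, hPa]
        simp
      · have hWa' : 0 < Wstar a := lt_of_le_of_ne (hW0 a) (Ne.symm hWa)
        have hQa : 0 < Q a := by
          rcases (hQ0 a).lt_or_eq with h|h
          · exact h
          · exact absurd (hWQ a h.symm) hWa
        have hk := point_key t (w t a) (P a) (Wstar a) (Q a) h0t.le ht1 (hP0 a) hWa' hQa
          (by simp [hw])
        nlinarith [hk]
    have h2 := Finset.sum_le_sum hpt
    have hsum1 : ∀ a : A, (P a - Wstar a) * (w t a / Wstar a)
        = (1-t)*(P a - Wstar a) + t*((P a - Wstar a)*(P a / Wstar a)) := by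
      intro a
      by_cases hWa : Wstar a = 0
      · simp [hWa, hAC a hWa, hw]
      · simp only [hw]
        field_simp
    have h3 : ∑ a, (t * ((P a - Wstar a) * (w t a / Wstar a))
        + t * ((P a - Wstar a) * Real.log (Wstar a / Q a)))
        = t*t*K + t*L + (t*(1-t)) * (∑ a, (P a - Wstar a)) := by
      rw [hK, hL, Finset.mul_sum, Finset.mul_sum, Finset.mul_sum,
        ← Finset.sum_add_distrib, ← Finset.sum_add_distrib]
      apply Finset.sum_congr rfl
      intro a _
      rw [hsum1 a]
      ring
    have h3b : (∑ a, (P a - Wstar a)) = 0 := by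
      rw [Finset.sum_sub_distrib, hP1, hW1]; ring
    rw [h3b, mul_zero, add_zero] at h3
    have h4 : ∑ a, (w t a * Real.log (w t a / Q a) - Wstar a * Real.log (Wstar a / Q a))
        = (∑ a, w t a * Real.log (w t a / Q a)) - ∑ a, Wstar a * Real.log (Wstar a / Q a) :=
      Finset.sum_sub_distrib _ _
    by_contra hneg
    push_neg at hneg
    have h5 : t*(t*K + L) < 0 := mul_neg_of_pos_of_neg h0t hneg
    nlinarith
  have hL0 : (0:ℝ) ≤ L := aux_lin K L hKL
  linarith
end
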